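/- arXiv:2109.08742 — 4 statements merged into one kernel-verified Lean document; each statement's English description precedes it below -/
import Mathlib

section
/- Let n ≥ 1, α ∈ (0,1), x ∈ ℝⁿ, μ ∈ ℝⁿ, and let Σ be an n×n positive semidefinite matrix. Then every probability measure P ∈ 𝒫(μ,Σ) satisfies P{a ∈ ℝⁿ : aᵀx ≤ 0} ≥ 1 − α if and only if μᵀx + √((1−α)/α)·√(xᵀΣx) ≤ 0. -/
open MeasureTheory
set_option maxHeartbeats 2000000

noncomputable section

/-- Inner product `aᵀx` on `ℝⁿ`. -/
def dotv {n : ℕ} (a x : Fin n → ℝ) : ℝ := ∑ i, a i * x i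

/-- Mean vector of a probability measure on `ℝⁿ`. -/
def meanVec {n : ℕ} (P : Measure (Fin n → ℝ)) : Fin n → ℝ := fun i => ∫ a, a i ∂P

/-- Covariance matrix of a probability measure on `ℝⁿ`. -/
def covMat {n : ℕ} (P : Measure (Fin n → ℝ)) : Matrix (Fin n) (Fin n) ℝ :=
  Matrix.of fun i j => ∫ a, (a i - meanVec P i) * (a j - meanVec P j) ∂P

/-- Finite second moments. -/
def hasFiniteSecondMoments {n : ℕ} (P : Measure (Fin n → ℝ)) : Prop :=
  (∀ i, Integrable (fun a => a i) P) ∧ ∀ i j, Integrable (fun a => a i * a j) P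

/-- The radius function of a set `S ⊆ ℝⁿ`:
`r(x) = (1/2)·sup_{a₁,a₂ ∈ S} |a₁ᵀx − a₂ᵀx|`. -/
def radius {n : ℕ} (S : Set (Fin n → ℝ)) (x : Fin n → ℝ) : ℝ :=
  (1/2) * sSup {y | ∃ a₁ ∈ S, ∃ a₂ ∈ S, y = |dotv a₁ x - dotv a₂ x|}

/-- Sample mean of `N` samples. -/
def sampleMean {n N : ℕ} (a : Fin N → Fin n → ℝ) : Fin n → ℝ :=
  fun i => (∑ j, a j i) / N

/-- Sample covariance of `N` samples. -/
def sampleCov {n N : ℕ} (a : Fin N → Fin n → ℝ) : Matrix (Fin n) (Fin n) ℝ :=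
  Matrix.of fun i k => (∑ j, (a j i - sampleMean a i) * (a j k - sampleMean a k)) / N

/-! ### Auxiliary lemmas -/

lemma quad_eq {n : ℕ} (C : Matrix (Fin n) (Fin n) ℝ) (x y : Fin n → ℝ) :
    dotProduct y (C.mulVec x) = ∑ i, ∑ j, y i * C i j * x j := by
  simp [dotProduct, Matrix.mulVec, Finset.mul_sum, mul_assoc]

lemma quad_nonneg {n : ℕ} {C : Matrix (Fin n) (Fin n) ℝ} (hC : C.PosSemidef) (x : Fin n → ℝ) :
    0 ≤ ∑ i, ∑ j, x i * C i j * x j := by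
  have := hC.dotProduct_mulVec_nonneg x
  rwa [star_trivial, quad_eq] at this

lemma quad_symm {n : ℕ} {C : Matrix (Fin n) (Fin n) ℝ} (hC : C.PosSemidef) (x y : Fin n → ℝ) :
    ∑ i, ∑ j, y i * C i j * x j = ∑ i, ∑ j, x i * C i j * y j := by
  rw [Finset.sum_comm]
  refine Finset.sum_congr rfl fun j _ => Finset.sum_congr rfl fun i _ => ?_
  have h : C j i = C i j := by
    have := hC.1.apply i j
    simpa using this
  rw [h]; ring

lemma psd_cauchy_schwarz {n : ℕ} {C : Matrix (Fin n) (Fin n) ℝ} (hC : C.PosSemidef)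
    (x y : Fin n → ℝ) :
    (∑ i, ∑ j, y i * C i j * x j) ^ 2 ≤
      (∑ i, ∑ j, y i * C i j * y j) * (∑ i, ∑ j, x i * C i j * x j) := by
  set A := ∑ i, ∑ j, x i * C i j * x j with hA
  set B := ∑ i, ∑ j, y i * C i j * x j with hB
  set E := ∑ i, ∑ j, y i * C i j * y j with hE
  have key : ∀ t : ℝ, 0 ≤ A * (t * t) + (2 * B) * t + E := by
    intro t
    have h0 := quad_nonneg hC (fun i => t * x i + y i)
    have h1 : ∑ i, ∑ j, (t * x i + y i) * C i j * (t * x j + y j)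
        = (∑ i, ∑ j, x i * C i j * x j) * (t*t) + ((∑ i, ∑ j, x i * C i j * y j) * t
          + ((∑ i, ∑ j, y i * C i j * x j) * t + (∑ i, ∑ j, y i * C i j * y j))) := by
      simp only [Finset.sum_mul, ← Finset.sum_add_distrib]
      exact Finset.sum_congr rfl fun i _ => Finset.sum_congr rfl fun j _ => by ring
    rw [h1, quad_symm hC y x] at h0
    rw [← hA, ← hB, ← hE] at h0
    linarith
  have := discrim_le_zero key
  rw [discrim] at this
  nlinarith [this]

section dmeas

variable {α : Type*} [MeasurableSpace α] [MeasurableSingletonClass α]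
variable {ι : Type*} [Fintype ι]

/-- Finite discrete measure with weights `w` at points `pts`. -/
def dmeas (w : ι → ℝ) (pts : ι → α) : Measure α :=
  ∑ i, ENNReal.ofReal (w i) • Measure.dirac (pts i)

omit [MeasurableSingletonClass α] in
lemma dmeas_apply (w : ι → ℝ) (pts : ι → α) {s : Set α} (hs : MeasurableSet s) :
    dmeas w pts s = ∑ i, ENNReal.ofReal (w i) * s.indicator 1 (pts i) := by
  rw [dmeas, Measure.finset_sum_apply]
  refine Finset.sum_congr rfl fun i _ => ?_
  rw [Measure.smul_apply, Measure.dirac_apply' _ hs, smul_eq_mul]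

lemma integrable_dirac' {f : α → ℝ} (hf : Measurable f) (a : α) :
    Integrable f (Measure.dirac a) := by
  refine ⟨hf.aestronglyMeasurable, ?_⟩
  simp [HasFiniteIntegral, lintegral_dirac]

lemma dmeas_integrable (w : ι → ℝ) (pts : ι → α) {f : α → ℝ} (hf : Measurable f) :
    Integrable f (dmeas w pts) := by
  rw [dmeas]
  refine integrable_finset_sum_measure.2 fun i _ => ?_
  exact (integrable_dirac' hf (pts i)).smul_measure ENNReal.ofReal_ne_top

lemma dmeas_integral (w : ι → ℝ) (hw : ∀ i, 0 ≤ w i) (pts : ι → α) {f : α → ℝ}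
    (hf : Measurable f) :
    ∫ a, f a ∂(dmeas w pts) = ∑ i, w i * f (pts i) := by
  rw [dmeas, integral_finset_sum_measure
    (fun i _ => (integrable_dirac' hf (pts i)).smul_measure ENNReal.ofReal_ne_top)]
  refine Finset.sum_congr rfl fun i _ => ?_
  rw [integral_smul_measure, integral_dirac, ENNReal.toReal_ofReal (hw i), smul_eq_mul]

end dmeas

lemma dotv_measurable {n : ℕ} (x : Fin n → ℝ) :
    Measurable (fun a : Fin n → ℝ => dotv a x) := by
  have : (fun a : Fin n → ℝ => dotv a x) = fun a => ∑ i, a i * x i := rfl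
  rw [this]
  exact Finset.measurable_sum _ fun i _ => (measurable_pi_apply i).mul_const _

lemma triple_sum_eval {n : ℕ} (F : Bool × Fin n × Bool → ℝ) :
    ∑ p : Bool × Fin n × Bool, F p
      = ∑ k : Fin n, (F (true, k, true) + F (true, k, false)
          + (F (false, k, true) + F (false, k, false))) := by
  rw [Fintype.sum_prod_type, Fintype.sum_bool]
  rw [Fintype.sum_prod_type, Fintype.sum_prod_type, ← Finset.sum_add_distrib]
  refine Finset.sum_congr rfl fun k _ => ?_
  rw [Fintype.sum_bool, Fintype.sum_bool]

/-- Lemma 3.1 of Calafiore–El Ghaoui / El Ghaoui et al.: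
for `α ∈ (0,1)`, every probability measure with mean `μ` and covariance `C`
satisfies `P{a : aᵀx ≤ 0} ≥ 1 − α` iff `μᵀx + √((1−α)/α)·√(xᵀCx) ≤ 0`. -/
theorem stmt0 {n : ℕ} (hn : 1 ≤ n) (α : ℝ) (hα : α ∈ Set.Ioo (0:ℝ) 1)
    (x μ : Fin n → ℝ) (C : Matrix (Fin n) (Fin n) ℝ) (hC : C.PosSemidef) :
    (∀ (P : Measure (Fin n → ℝ)), IsProbabilityMeasure P → hasFiniteSecondMoments P →
      meanVec P = μ → covMat P = C →
      ENNReal.ofReal (1 - α) ≤ P {a | dotv a x ≤ 0}) ↔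
    dotv μ x + Real.sqrt ((1 - α) / α) * Real.sqrt (∑ i, ∑ j, x i * C i j * x j) ≤ 0 := by
  obtain ⟨hα0, hα1⟩ := hα
  have hS0 : 0 ≤ ∑ i, ∑ j, x i * C i j * x j := quad_nonneg hC x
  set S := ∑ i, ∑ j, x i * C i j * x j with hSdef
  have hβpos : 0 < Real.sqrt ((1-α)/α) :=
    Real.sqrt_pos.2 (div_pos (by linarith) hα0)
  set β := Real.sqrt ((1-α)/α) with hβdef
  have hβsq : β * β = (1-α)/α := Real.mul_self_sqrt (le_of_lt (div_pos (by linarith) hα0))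
  constructor
  · intro h
    by_contra hfail
    push_neg at hfail
    set m := dotv μ x with hmdef
    set σ := Real.sqrt S with hσdef
    have hσ0 : 0 ≤ σ := Real.sqrt_nonneg S
    have hσsq : σ * σ = S := Real.mul_self_sqrt hS0
    have hc : 0 < m + β * σ := hfail
    set c := m + β * σ with hcdef
    have hσβ1 : 0 < σ * β + 1 := by positivity
    set t0 := min 1 (c / (σ * β + 1)) with ht0def
    have ht0pos : 0 < t0 := lt_min one_pos (div_pos hc hσβ1)
    have ht0le : t0 ≤ c / (σ*β+1) := min_le_right _ _
    have ht0le1 : t0 ≤ 1 := min_le_left _ _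
    have hkey0 : t0 * (σ*β+1) ≤ c := (le_div_iff₀ hσβ1).1 ht0le
    set b := β * (1 - t0/2) with hbdef
    have hb_pos : 0 < b := by nlinarith
    have hb_lt : b < β := by nlinarith
    have hmb : 0 < m + σ * b := by nlinarith [mul_nonneg hσ0 hβpos.le]
    -- the deviation direction `v`
    set v : Fin n → ℝ := fun i => if S = 0 then 0 else (∑ j, C i j * x j) / σ with hvdef
    have hvx : ∑ i, v i * x i = σ := by
      by_cases hS : S = 0
      · simp [hvdef, hS, hσdef, Real.sqrt_zero]
      · have hSpos : 0 < S := lt_of_le_of_ne hS0 (Ne.symm hS)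
        have hσpos : 0 < σ := Real.sqrt_pos.2 hSpos
        simp only [hvdef, if_neg hS]
        have h1 : ∑ i, ((∑ j, C i j * x j) / σ) * x i
            = (∑ i, ∑ j, x i * C i j * x j) / σ := by
          rw [Finset.sum_div]
          refine Finset.sum_congr rfl fun i _ => ?_
          rw [div_mul_eq_mul_div]
          congr 1
          rw [Finset.sum_mul]
          exact Finset.sum_congr rfl fun j _ => by ring
        rw [h1, ← hSdef, ← hσsq, mul_div_assoc, div_self (ne_of_gt hσpos), mul_one]
    have hxv : ∑ i, x i * v i = σ := by
      rw [← hvx]; exact Finset.sum_congr rfl fun i _ => mul_comm _ _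
    -- the residual covariance `M`
    set M : Matrix (Fin n) (Fin n) ℝ := Matrix.of (fun i j => C i j - v i * v j) with hMdef
    have hMapp : ∀ i j, M i j = C i j - v i * v j := fun i j => rfl
    have hCsymm : ∀ i j, C j i = C i j := fun i j => by
      have := hC.1.apply i j; simpa using this
    have hMexp : ∀ y : Fin n → ℝ, ∑ i, ∑ j, y i * M i j * y j
        = (∑ i, ∑ j, y i * C i j * y j) - (∑ i, y i * v i) * (∑ j, y j * v j) := by
      intro y
      rw [Finset.sum_mul_sum, ← Finset.sum_sub_distrib]
      refine Finset.sum_congr rfl fun i _ => ?_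
      rw [← Finset.sum_sub_distrib]
      refine Finset.sum_congr rfl fun j _ => ?_
      rw [hMapp]; ring
    have hquadM : ∀ y : Fin n → ℝ, 0 ≤ ∑ i, ∑ j, y i * M i j * y j := by
      intro y
      rw [hMexp y]
      by_cases hS : S = 0
      · have hv0 : ∀ i, v i = 0 := fun i => by simp [hvdef, hS]
        have : ∑ i, y i * v i = 0 := Finset.sum_eq_zero fun i _ => by rw [hv0 i, mul_zero]
        rw [this, zero_mul, sub_zero]
        exact quad_nonneg hC y
      · have hSpos : 0 < S := lt_of_le_of_ne hS0 (Ne.symm hS)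
        have hσpos : 0 < σ := Real.sqrt_pos.2 hSpos
        have hcs := psd_cauchy_schwarz hC x y
        have hyv : ∑ i, y i * v i = (∑ i, ∑ j, y i * C i j * x j) / σ := by
          simp only [hvdef, if_neg hS]
          rw [Finset.sum_div]
          refine Finset.sum_congr rfl fun i _ => ?_
          rw [mul_div_assoc']
          congr 1
          rw [Finset.mul_sum]
          exact Finset.sum_congr rfl fun j _ => by ring
        rw [hyv]
        set B := ∑ i, ∑ j, y i * C i j * x j with hBdef
        have h2 : B / σ * (B / σ) = B^2 / S := by
          rw [← hσsq]; field_simp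
        rw [h2, sub_nonneg, div_le_iff₀ hSpos, hSdef]
        exact hcs
    have hMher : M.IsHermitian := by
      rw [Matrix.IsHermitian]
      ext i j
      rw [Matrix.conjTranspose_apply, hMapp, hMapp, star_trivial, hCsymm]
      ring
    have hM : M.PosSemidef := .of_dotProduct_mulVec_nonneg hMher (fun y => by
      rw [star_trivial, quad_eq]; exact hquadM y)
    set D := (open scoped MatrixOrder in CFC.sqrt M) with hDdef
    have hDD : D * D = M := by open scoped MatrixOrder in exact CFC.sqrt_mul_sqrt_self M hM.nonneg
    have hDsym : ∀ i j, D i j = D j i := by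
      intro i j
      have := (show D.PosSemidef by open scoped MatrixOrder in exact Matrix.nonneg_iff_posSemidef.mp (CFC.sqrt_nonneg M)).1.apply j i
      simpa using this
    have hMsum : ∀ i j, M i j = ∑ k, D i k * D j k := by
      intro i j
      have h1 : (D * D) i j = M i j := by rw [hDD]
      rw [Matrix.mul_apply] at h1
      rw [← h1]
      exact Finset.sum_congr rfl fun k _ => by rw [hDsym k j]
    have hxMx : ∑ i, ∑ j, x i * M i j * x j = 0 := by
      rw [hMexp x, hxv, hσsq, ← hSdef]; ring
    have hDx : ∀ k, ∑ i, x i * D i k = 0 := by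
      have hsq : ∑ k, (∑ i, x i * D i k) * (∑ i, x i * D i k) = 0 := by
        rw [← hxMx]
        have h1 : ∀ k : Fin n, (∑ i, x i * D i k) * (∑ i, x i * D i k)
            = ∑ i, ∑ j, (x i * D i k) * (x j * D j k) := fun k => Finset.sum_mul_sum _ _ _ _
        rw [Finset.sum_congr rfl fun k _ => h1 k, Finset.sum_comm]
        refine Finset.sum_congr rfl fun i _ => ?_
        rw [Finset.sum_comm]
        refine Finset.sum_congr rfl fun j _ => ?_
        rw [hMsum i j, Finset.mul_sum, Finset.sum_mul]
        exact Finset.sum_congr rfl fun k _ => by ring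
      intro k
      have h := (Finset.sum_eq_zero_iff_of_nonneg
        (fun k _ => mul_self_nonneg (∑ i, x i * D i k))).1 hsq k (Finset.mem_univ k)
      exact mul_self_eq_zero.1 h
    -- the discrete distribution
    have hn' : (1:ℝ) ≤ (n:ℝ) := by exact_mod_cast hn
    have hnR : (0:ℝ) < (n:ℝ) := by linarith
    have hu : Real.sqrt n * Real.sqrt n = (n:ℝ) := Real.mul_self_sqrt (by positivity)
    have hu0 : Real.sqrt (n:ℝ) ≠ 0 := by
      intro hz
      rw [hz, zero_mul] at hu
      exact (ne_of_gt hnR) hu.symm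
    have hb2 : (0:ℝ) < 1 + b*b := by positivity
    have hbne : b ≠ 0 := ne_of_gt hb_pos
    have hb2ne : (1:ℝ) + b*b ≠ 0 := ne_of_gt hb2
    clear_value t0
    clear_value b
    set ζ : Bool → ℝ := fun s => if s then b else -(1/b) with hζdef
    set q : Bool → ℝ := fun s => if s then 1/(1+b*b) else (b*b)/(1+b*b) with hqdef
    set ee : Bool → ℝ := fun s => if s then (1:ℝ) else -1 with heedef
    set pts : Bool × Fin n × Bool → (Fin n → ℝ) :=
      fun p => fun i => μ i + ζ p.1 * v i + ee p.2.2 * Real.sqrt n * D i p.2.1 with hptsdef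
    set w : Bool × Fin n × Bool → ℝ := fun p => q p.1 / (2*n) with hwdef
    have hq_nonneg : ∀ s, 0 ≤ q s := by
      intro s
      cases s <;> simp [hqdef] <;> positivity
    have hw_nonneg : ∀ p, 0 ≤ w p := fun p => div_nonneg (hq_nonneg p.1) (by positivity)
    set P := dmeas w pts with hPdef
    have hmeas1 : ∀ i, Measurable fun a : Fin n → ℝ => a i := fun i => measurable_pi_apply i
    -- total mass one
    have hwsum : ∑ p : Bool × Fin n × Bool, w p = 1 := by
      rw [triple_sum_eval]
      have hterm : ∀ k : Fin n, w (true, k, true) + w (true, k, false)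
          + (w (false, k, true) + w (false, k, false)) = 1 / n := by
        intro k
        simp only [hwdef, hqdef, if_true, if_false, Bool.false_eq_true, ↓reduceIte]
        field_simp [hbne, hb2ne]
        ring
      rw [Finset.sum_congr rfl fun k _ => hterm k, Finset.sum_const, Finset.card_univ,
        Fintype.card_fin, nsmul_eq_mul]
      field_simp
      try ring
    have hPuniv : P Set.univ = 1 := by
      rw [hPdef, dmeas_apply w pts MeasurableSet.univ]
      simp only [Set.indicator_univ, Pi.one_apply, mul_one]
      rw [← ENNReal.ofReal_sum_of_nonneg (fun p _ => hw_nonneg p), hwsum, ENNReal.ofReal_one]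
    have hPprob : IsProbabilityMeasure P := ⟨hPuniv⟩
    have hPfin : hasFiniteSecondMoments P :=
      ⟨fun i => dmeas_integrable w pts (hmeas1 i),
       fun i j => dmeas_integrable w pts ((hmeas1 i).mul (hmeas1 j))⟩
    -- mean
    have hPmean : meanVec P = μ := by
      funext i
      show ∫ a, a i ∂P = μ i
      rw [hPdef, dmeas_integral w hw_nonneg pts (hmeas1 i), triple_sum_eval]
      have hterm : ∀ k : Fin n, w (true, k, true) * pts (true, k, true) i
          + w (true, k, false) * pts (true, k, false) i
          + (w (false, k, true) * pts (false, k, true) i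
          + w (false, k, false) * pts (false, k, false) i) = 1 / n * μ i := by
        intro k
        simp only [hwdef, hqdef, hζdef, heedef, hptsdef, if_true, if_false, Bool.false_eq_true, ↓reduceIte]
        rw [show ((n:ℝ)) = Real.sqrt n * Real.sqrt n from hu.symm]
        field_simp [hbne, hb2ne, hu0]
        ring_nf
        try simp only [Real.sq_sqrt hnR.le]
        try ring
      rw [Finset.sum_congr rfl fun k _ => hterm k, Finset.sum_const, Finset.card_univ,
        Fintype.card_fin, nsmul_eq_mul]
      field_simp
      try ring
    -- covariance
    have hPcov : covMat P = C := by
      ext i j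
      show covMat P i j = C i j
      rw [covMat, Matrix.of_apply, hPmean]
      have hfm : Measurable fun a : Fin n → ℝ => (a i - μ i) * (a j - μ j) :=
        ((hmeas1 i).sub measurable_const).mul ((hmeas1 j).sub measurable_const)
      rw [hPdef, dmeas_integral w hw_nonneg pts hfm, triple_sum_eval]
      have hterm : ∀ k : Fin n, w (true, k, true) * ((pts (true, k, true) i - μ i) * (pts (true, k, true) j - μ j))
          + w (true, k, false) * ((pts (true, k, false) i - μ i) * (pts (true, k, false) j - μ j))
          + (w (false, k, true) * ((pts (false, k, true) i - μ i) * (pts (false, k, true) j - μ j))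
          + w (false, k, false) * ((pts (false, k, false) i - μ i) * (pts (false, k, false) j - μ j)))
          = 1 / n * (v i * v j) + D i k * D j k := by
        intro k
        simp only [hwdef, hqdef, hζdef, heedef, hptsdef, if_true, if_false, Bool.false_eq_true, ↓reduceIte]
        rw [show ((n:ℝ)) = Real.sqrt n * Real.sqrt n from hu.symm]
        field_simp [hbne, hb2ne, hu0]
        ring_nf
        try simp only [Real.sq_sqrt hnR.le]
        try ring
      rw [Finset.sum_congr rfl fun k _ => hterm k, Finset.sum_add_distrib,
        Finset.sum_const, Finset.card_univ, Fintype.card_fin, nsmul_eq_mul, ← hMsum i j,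
        hMapp i j]
      field_simp
      ring
    -- value of `dotv` at the atoms
    have hdot : ∀ p : Bool × Fin n × Bool, dotv (pts p) x = m + ζ p.1 * σ := by
      intro p
      show ∑ i, pts p i * x i = m + ζ p.1 * σ
      have h1 : ∀ i, pts p i * x i
          = μ i * x i + ζ p.1 * (v i * x i) + (ee p.2.2 * Real.sqrt n) * (x i * D i p.2.1) := by
        intro i
        simp only [hptsdef]
        ring
      rw [Finset.sum_congr rfl fun i _ => h1 i, Finset.sum_add_distrib,
        Finset.sum_add_distrib, ← Finset.mul_sum, ← Finset.mul_sum, hvx, hDx p.2.1,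
        mul_zero, add_zero]
      rfl
    -- the measure of the half space is at most b²/(1+b²)
    set T0 := {a : Fin n → ℝ | dotv a x ≤ 0} with hT0def
    have hT0meas : MeasurableSet T0 :=
      measurableSet_le (dotv_measurable (n := n) x) measurable_const
    have hnotin : ∀ k e, pts (true, k, e) ∉ T0 := by
      intro k e hin
      have h1 : dotv (pts (true, k, e)) x ≤ 0 := hin
      rw [hdot (true, k, e)] at h1
      simp only [hζdef, if_true] at h1
      nlinarith
    set w' : Bool × Fin n × Bool → ℝ := fun p => if p.1 then 0 else w p with hw'def
    have hPT0 : P T0 ≤ ENNReal.ofReal ((b*b)/(1+b*b)) := by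
      rw [hPdef, dmeas_apply w pts hT0meas]
      have hle1 : ∀ p : Bool × Fin n × Bool,
          ENNReal.ofReal (w p) * T0.indicator 1 (pts p) ≤ ENNReal.ofReal (w' p) := by
        intro p
        rcases p with ⟨s, k, e⟩
        cases s
        · have hind : T0.indicator (1 : (Fin n → ℝ) → ENNReal) (pts (false, k, e)) ≤ 1 := by
            by_cases hmem : pts (false, k, e) ∈ T0 <;> simp [hmem]
          have hw' : w' (false, k, e) = w (false, k, e) := by simp [hw'def]
          rw [hw']
          calc ENNReal.ofReal (w (false, k, e)) * T0.indicator 1 (pts (false, k, e))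
              ≤ ENNReal.ofReal (w (false, k, e)) * 1 := mul_le_mul_right hind _
            _ = ENNReal.ofReal (w (false, k, e)) := mul_one _
        · have hz : T0.indicator (1 : (Fin n → ℝ) → ENNReal) (pts (true, k, e)) = 0 :=
            Set.indicator_of_notMem (hnotin k e) _
          rw [hz, mul_zero]
          exact zero_le
      calc (∑ p : Bool × Fin n × Bool, ENNReal.ofReal (w p) * T0.indicator 1 (pts p))
          ≤ ∑ p : Bool × Fin n × Bool, ENNReal.ofReal (w' p) :=
            Finset.sum_le_sum fun p _ => hle1 p
        _ = ENNReal.ofReal (∑ p : Bool × Fin n × Bool, w' p) :=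
            (ENNReal.ofReal_sum_of_nonneg fun p _ => by
              rcases p with ⟨s, k, e⟩
              cases s
              · simpa [hw'def] using hw_nonneg (false, k, e)
              · simp [hw'def]).symm
        _ = ENNReal.ofReal ((b*b)/(1+b*b)) := by
            congr 1
            rw [triple_sum_eval]
            have hterm : ∀ k : Fin n, w' (true, k, true) + w' (true, k, false)
                + (w' (false, k, true) + w' (false, k, false))
                = 1 / n * ((b*b)/(1+b*b)) := by
              intro k
              simp only [hw'def, hwdef, hqdef, if_true, if_false, Bool.false_eq_true, ↓reduceIte]
              field_simp [hbne, hb2ne]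
              ring
            rw [Finset.sum_congr rfl fun k _ => hterm k, Finset.sum_const, Finset.card_univ,
              Fintype.card_fin, nsmul_eq_mul]
            field_simp
            try ring
    have hle := h P hPprob hPfin hPmean hPcov
    have hcmp : ENNReal.ofReal (1-α) ≤ ENNReal.ofReal ((b*b)/(1+b*b)) :=
      le_trans hle hPT0
    rw [ENNReal.ofReal_le_ofReal_iff (by positivity)] at hcmp
    have hfinal : (1-α) * (1+b*b) ≤ b*b := (le_div_iff₀ hb2).1 hcmp
    have hd : α * ((1-α)/α) = 1-α := mul_div_cancel₀ _ (ne_of_gt hα0)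
    have hββ : α * (β*β) = 1-α := by rw [hβsq, hd]
    nlinarith [mul_pos (sub_pos.2 hb_lt) (add_pos hβpos hb_pos)]
  · intro hineq P hP hfin hmean hcov
    -- Cantelli's inequality
    set m := dotv μ x with hmdef
    set Y := fun a : Fin n → ℝ => dotv a x - m with hYdef
    have hint1 : ∀ i, Integrable (fun a : Fin n → ℝ => a i - μ i) P :=
      fun i => (hfin.1 i).sub (integrable_const _)
    have hint2 : ∀ i j, Integrable (fun a : Fin n → ℝ => (a i - μ i) * (a j - μ j)) P := by
      intro i j
      have he : (fun a : Fin n → ℝ => (a i - μ i) * (a j - μ j))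
          = fun a => a i * a j - μ i * a j - (μ j * a i - μ i * μ j) := by funext a; ring
      rw [he]
      exact ((hfin.2 i j).sub ((hfin.1 j).const_mul _)).sub
        (((hfin.1 i).const_mul _).sub (integrable_const _))
    have hYeq : Y = fun a => ∑ i, x i * (a i - μ i) := by
      funext a
      rw [hYdef]
      simp only [hmdef, dotv, ← Finset.sum_sub_distrib]
      exact Finset.sum_congr rfl fun i _ => by ring
    have hYint : Integrable Y P := by
      rw [hYeq]; exact integrable_finset_sum _ fun i _ => (hint1 i).const_mul _
    have hYsq_eq : (fun a => Y a * Y a)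
        = fun a => ∑ i, ∑ j, (x i * x j) * ((a i - μ i) * (a j - μ j)) := by
      funext a
      rw [hYeq, Finset.sum_mul_sum]
      exact Finset.sum_congr rfl fun i _ => Finset.sum_congr rfl fun j _ => by ring
    have hYsqint : Integrable (fun a => Y a * Y a) P := by
      rw [hYsq_eq]
      exact integrable_finset_sum _ fun i _ =>
        integrable_finset_sum _ fun j _ => (hint2 i j).const_mul _
    have hEi : ∀ i, ∫ a, a i ∂P = μ i := fun i => congrFun hmean i
    have hEg : ∀ i, ∫ a, (a i - μ i) ∂P = 0 := by
      intro i
      rw [integral_sub (hfin.1 i) (integrable_const _), hEi i, integral_const]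
      simp
    have hEY : ∫ a, Y a ∂P = 0 := by
      rw [hYeq, integral_finset_sum _ (fun i _ => (hint1 i).const_mul _)]
      refine Finset.sum_eq_zero fun i _ => ?_
      rw [integral_const_mul, hEg i, mul_zero]
    have hCij : ∀ i j, ∫ a, (a i - μ i) * (a j - μ j) ∂P = C i j := by
      intro i j
      have h1 : covMat P i j = C i j := by rw [hcov]
      rw [covMat, Matrix.of_apply, hmean] at h1
      exact h1
    have hEYsq : ∫ a, Y a * Y a ∂P = S := by
      rw [hYsq_eq, integral_finset_sum _ (fun i _ =>
        integrable_finset_sum _ fun j _ => (hint2 i j).const_mul _)]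
      refine Finset.sum_congr rfl fun i _ => ?_
      rw [integral_finset_sum _ (fun j _ => (hint2 i j).const_mul _)]
      refine Finset.sum_congr rfl fun j _ => ?_
      rw [integral_const_mul, hCij i j]; ring
    have hZmeas := dotv_measurable (n := n) x
    set T := {a : Fin n → ℝ | 0 < dotv a x} with hTdef
    have hTmeas : MeasurableSet T := measurableSet_lt measurable_const hZmeas
    have hsqrtS0 : 0 ≤ Real.sqrt S := Real.sqrt_nonneg S
    have hSsq : Real.sqrt S * Real.sqrt S = S := Real.mul_self_sqrt hS0
    have hmle : m ≤ 0 := by nlinarith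
    have claim : P T ≤ ENNReal.ofReal α := by
      rcases eq_or_lt_of_le hmle with hm0 | hmneg
      · -- m = 0 : then S = 0 and Y = 0 a.e.
        have hsqS : Real.sqrt S ≤ 0 := by nlinarith
        have hSz : S = 0 := by nlinarith
        have hzero : ∀ᵐ a ∂P, Y a * Y a = 0 := by
          have := (integral_eq_zero_iff_of_nonneg
            (fun a => mul_self_nonneg (Y a)) hYsqint).1 (by rw [hEYsq, hSz])
          exact this
        rw [ae_iff] at hzero
        have hsub : T ⊆ {a | ¬ (Y a * Y a = 0)} := by
          intro a ha
          have h1 : 0 < dotv a x := ha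
          have h2 : Y a = dotv a x := by rw [hYdef]; simp [← hm0]
          have : 0 < Y a * Y a := by rw [h2]; exact mul_pos h1 h1
          exact fun hc => by rw [hc] at this; exact lt_irrefl 0 this
        calc P T ≤ P {a | ¬ (Y a * Y a = 0)} := measure_mono hsub
          _ = 0 := hzero
          _ ≤ ENNReal.ofReal α := zero_le
      · -- m < 0 : Cantelli
        set t := -m with htdef
        have ht : 0 < t := by simp [htdef]; linarith
        set f := fun a : Fin n → ℝ => (t * Y a + S) * (t * Y a + S) with hfdef
        have hfeq : f = fun a => (t*t) * (Y a * Y a) + ((2*t*S) * Y a + S*S) :=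
          funext fun a => by rw [hfdef]; ring
        have hfint : Integrable f P := by
          rw [hfeq]
          exact (hYsqint.const_mul _).add ((hYint.const_mul _).add (integrable_const _))
        have hg1 : Integrable (fun a => 2*t*S * Y a + S*S) P :=
          (hYint.const_mul _).add (integrable_const _)
        have hg2 : Integrable (fun a => (t*t) * (Y a * Y a)) P := hYsqint.const_mul _
        have hg3 : Integrable (fun a => 2*t*S * Y a) P := hYint.const_mul _
        have hEf : ∫ a, f a ∂P = t*t*S + S*S := by
          simp only [hfeq]
          rw [integral_add hg2 hg1, integral_add hg3 (integrable_const _),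
            integral_const_mul, integral_const_mul, hEY, hEYsq, integral_const]
          simp
        have markov := mul_meas_ge_le_integral_of_nonneg
          (ae_of_all _ fun a => mul_self_nonneg (t * Y a + S)) hfint ((t*t+S)*(t*t+S))
        rw [hEf] at markov
        have hsub : T ⊆ {a | (t*t+S)*(t*t+S) ≤ f a} := by
          intro a ha
          have h1 : 0 < dotv a x := ha
          have h2 : Y a = dotv a x + t := by rw [hYdef, htdef]; ring
          have h3 : t*t + S ≤ t * Y a + S := by nlinarith [mul_pos ht h1]
          have h4 : (0:ℝ) ≤ t*t + S := by positivity
          show (t*t+S)*(t*t+S) ≤ f a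
          rw [hfdef]
          exact mul_le_mul h3 h3 h4 (by linarith)
        have h2 : P T ≤ P {a | (t*t+S)*(t*t+S) ≤ f a} := measure_mono hsub
        have h3 : (P T).toReal ≤ (P {a | (t*t+S)*(t*t+S) ≤ f a}).toReal :=
          ENNReal.toReal_mono (measure_ne_top P _) h2
        set r := (P {a | (t*t+S)*(t*t+S) ≤ f a}).toReal with hrdef
        have hr0 : 0 ≤ r := ENNReal.toReal_nonneg
        have key : (1-α) * S ≤ α * (t*t) := by
          have hβSt : β * Real.sqrt S ≤ t := by linarith
          have hsq : (β * Real.sqrt S) * (β * Real.sqrt S) ≤ t * t := by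
            nlinarith [mul_nonneg hβpos.le hsqrtS0]
          have he : (β * Real.sqrt S) * (β * Real.sqrt S) = ((1-α)/α) * S := by
            calc (β * Real.sqrt S) * (β * Real.sqrt S)
                = (β * β) * (Real.sqrt S * Real.sqrt S) := by ring
              _ = ((1-α)/α) * S := by rw [hβsq, hSsq]
          rw [he] at hsq
          have hd : (1-α)/α * α = 1-α := div_mul_cancel₀ _ (ne_of_gt hα0)
          nlinarith
        have hpos : (0:ℝ) < t*t + S := by positivity
        have h5 : S ≤ α * (t*t+S) := by nlinarith
        have h6 : (t*t+S)*(t*t+S)*r ≤ α*((t*t+S)*(t*t+S)) := by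
            have markov' : (t*t+S)*(t*t+S)*r ≤ t*t*S + S*S := markov
            nlinarith
        have h7 : r ≤ α := by
          have := mul_pos hpos hpos
          nlinarith
        have h8 : (P T).toReal ≤ α := le_trans h3 h7
        exact (ENNReal.le_ofReal_iff_toReal_le (measure_ne_top P T) hα0.le).2 h8
    have hset : {a : Fin n → ℝ | dotv a x ≤ 0} = Tᶜ := by
      ext a; simp [hTdef, not_lt]
    rw [hset, measure_compl hTmeas (measure_ne_top P T), measure_univ]
    have hone : ENNReal.ofReal (1-α) = 1 - ENNReal.ofReal α := by
      rw [ENNReal.ofReal_sub 1 hα0.le, ENNReal.ofReal_one]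
    rw [hone]
    exact tsub_le_tsub_left claim 1
end
end

section
/- Let ε, δ ∈ (0,1), c ∈ ℝ, μ* ∈ ℝ, σ*² ≥ 0, and v̲* ≤ v̄* in ℝ. Define G := {(μ, σ²) ∈ ℝ² : every probability measure P' on ℝ with mean μ, variance σ², and support contained in [v̲*, v̄*] satisfies P'{v : v + c ≤ 0} ≥ 1 − ε}. Let (Ω, 𝔽, ℚ) be a probability space and let Q : Ω → Set(ℝ²) be such that for ℚ-almost every ω one has Q(ω) ⊆ G, and ℚ{ω : (μ*, σ*²) ∈ Q(ω)} ≥ 1 − δ. Then every probability measure P on ℝ with mean μ*, variance σ*², and support contained in [v̲*, v̄*] satisfies (ℚ ⊗ P){(ω, v) : v + c ≤ 0} ≥ (1 − ε)·(1 − δ). -/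
open MeasureTheory

noncomputable section

/-- Mean of a probability measure on `ℝ`. -/
def mean1 (P : Measure ℝ) : ℝ := ∫ v, v ∂P

/-- Variance of a probability measure on `ℝ`. -/
def var1 (P : Measure ℝ) : ℝ := ∫ v, (v - mean1 P) ^ 2 ∂P

/-- Lemma 2 of the paper: confidence-region argument. -/
theorem stmt3 {Ω : Type*} [MeasurableSpace Ω] (ε δ c μstar σ2star vlo vhi : ℝ)
    (hε : ε ∈ Set.Ioo (0:ℝ) 1) (hδ : δ ∈ Set.Ioo (0:ℝ) 1)
    (hσ : 0 ≤ σ2star) (hv : vlo ≤ vhi)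
    (QQ : Measure Ω) [IsProbabilityMeasure QQ] (Qset : Ω → Set (ℝ × ℝ))
    (G : Set (ℝ × ℝ))
    (hG : G = {q : ℝ × ℝ | ∀ (P' : Measure ℝ), IsProbabilityMeasure P' →
      mean1 P' = q.1 → var1 P' = q.2 → P' (Set.Icc vlo vhi) = 1 →
      ENNReal.ofReal (1 - ε) ≤ P' {v | v + c ≤ 0}})
    (hsub : ∀ᵐ ω ∂QQ, Qset ω ⊆ G)
    (hconf : ENNReal.ofReal (1 - δ) ≤ QQ {ω | (μstar, σ2star) ∈ Qset ω}) :
    ∀ (P : Measure ℝ), IsProbabilityMeasure P → mean1 P = μstar → var1 P = σ2star →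
      P (Set.Icc vlo vhi) = 1 →
      ENNReal.ofReal ((1 - ε) * (1 - δ)) ≤ (QQ.prod P) {p | p.2 + c ≤ 0} := by
  intro P hP hmean hvar hsupp
  have hA : QQ {ω | (μstar, σ2star) ∈ Qset ω} ≠ 0 := by
    intro h0
    rw [h0] at hconf
    have h1 : ENNReal.ofReal (1 - δ) = 0 := le_antisymm hconf zero_le
    rw [ENNReal.ofReal_eq_zero] at h1
    linarith [hδ.2]
  have hmem : (μstar, σ2star) ∈ G := by
    by_contra hnot
    have hAsub : {ω | (μstar, σ2star) ∈ Qset ω} ⊆ {ω | ¬ (Qset ω ⊆ G)} := by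
      intro ω hω hsubG
      exact hnot (hsubG hω)
    exact hA (measure_mono_null hAsub (ae_iff.mp hsub))
  have hP' : ENNReal.ofReal (1 - ε) ≤ P {v | v + c ≤ 0} := by
    rw [hG] at hmem
    exact hmem P hP hmean hvar hsupp
  have hset : {p : Ω × ℝ | p.2 + c ≤ 0} = Set.univ ×ˢ {v | v + c ≤ 0} := by
    ext p; simp
  rw [hset, Measure.prod_prod, measure_univ, one_mul]
  calc ENNReal.ofReal ((1 - ε) * (1 - δ)) ≤ ENNReal.ofReal (1 - ε) := by
        apply ENNReal.ofReal_le_ofReal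
        nlinarith [hδ.1, hδ.2, hε.2]
    _ ≤ _ := hP'
end
end

section
/- Let α ∈ (0,1), x ∈ ℝⁿ, μ* ∈ ℝⁿ, and let s̲* ≤ s̄* in ℝⁿ (componentwise). Let S* := diag(s̄* − s̲*). If μ*ᵀx + √((1/2)·ln(1/α))·‖S*x‖₂ ≤ 0, then every probability measure P ∈ 𝒫_ind(μ*, s̲*, s̄*) satisfies P{a ∈ ℝⁿ : aᵀx ≤ 0} ≥ 1 − α. -/
open MeasureTheory

noncomputable section

/-- Euclidean norm on `ℝⁿ`. -/
def euclNorm {n : ℕ} (v : Fin n → ℝ) : ℝ := Real.sqrt (∑ i, (v i) ^ 2)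

/-- `P ∈ 𝒫_ind(μ, s̲, s̄)`: `P` is a product measure (the coordinates are
independent under `P`), the `i`-th marginal has mean `μᵢ` and support
contained in `[s̲ᵢ, s̄ᵢ]`. -/
def memPind {n : ℕ} (μ slo shi : Fin n → ℝ) (P : Measure (Fin n → ℝ)) : Prop :=
  ProbabilityTheory.iIndepFun (m := fun _ : Fin n => (inferInstance : MeasurableSpace ℝ))
    (fun i a => a i) P ∧
  (∀ i, ∫ a, a i ∂P = μ i) ∧
  (∀ i, P {a | a i ∈ Set.Icc (slo i) (shi i)} = 1)

open Real ProbabilityTheory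


lemma A_pos {p : ℝ} (hp0 : 0 ≤ p) (hp1 : p ≤ 1) (h : ℝ) : 0 < 1 - p + p * exp h := by
  rcases hp0.lt_or_eq with hp | hp
  · have := mul_pos hp (exp_pos h)
    linarith
  · simp [← hp]

/-- Key real inequality behind Hoeffding's lemma. -/
lemma key_ineq {p : ℝ} (hp0 : 0 ≤ p) (hp1 : p ≤ 1) (h : ℝ) :
    -(p*h) + Real.log (1 - p + p * exp h) ≤ h^2/8 := by
  set φ : ℝ → ℝ := fun h => -(p*h) + Real.log (1 - p + p * exp h) with hφ
  set G : ℝ → ℝ := fun h => h/4 + p - p * exp h / (1 - p + p * exp h) with hGdef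
  set g : ℝ → ℝ := fun h => h^2/8 - φ h with hg
  have hA : ∀ h : ℝ, HasDerivAt (fun y => 1 - p + p * exp y) (p * exp h) h := fun h => by
    simpa using (((Real.hasDerivAt_exp h).const_mul p).const_add (1-p))
  have hlog : ∀ h : ℝ, HasDerivAt (fun y => Real.log (1 - p + p * exp y))
      (p * exp h / (1 - p + p * exp h)) h := fun h => (hA h).log (A_pos hp0 hp1 h).ne'
  have hφ' : ∀ h : ℝ, HasDerivAt φ (-p + p * exp h / (1 - p + p * exp h)) h := by
    intro h
    have h2 : HasDerivAt (fun y : ℝ => -(p*y)) (-p) h := by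
      exact ((hasDerivAt_id h).const_mul p).neg.congr_deriv (by ring)
    exact h2.add (hlog h)
  have hg' : ∀ h : ℝ, HasDerivAt g (G h) h := by
    intro h
    have h2 : HasDerivAt (fun y : ℝ => y^2/8) (h/4) h := by
      have := (hasDerivAt_pow 2 h).div_const 8
      simpa [pow_one] using this.congr_deriv (by ring)
    have := h2.sub (hφ' h)
    exact this.congr_deriv (by simp only [hGdef]; ring)
  -- derivative of G
  have hG' : ∀ h : ℝ, HasDerivAt G
      (1/4 - (p * exp h * (1 - p + p * exp h) - p * exp h * (p * exp h)) /
        (1 - p + p * exp h)^2) h := by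
    intro h
    have hdiv : HasDerivAt (fun y => p * exp y / (1 - p + p * exp y))
        ((p * exp h * (1 - p + p * exp h) - p * exp h * (p * exp h)) /
          (1 - p + p * exp h)^2) h := by
      have hnum : HasDerivAt (fun y : ℝ => p * exp y) (p * exp h) h :=
        (Real.hasDerivAt_exp h).const_mul p
      exact hnum.div (hA h) (A_pos hp0 hp1 h).ne'
    have h1 : HasDerivAt (fun y : ℝ => y/4 + p) (1/4) h := by
      simpa using ((hasDerivAt_id h).div_const 4).add_const p
    exact h1.sub hdiv
  have hG'nonneg : ∀ h : ℝ, 0 ≤ 1/4 - (p * exp h * (1 - p + p * exp h) - p * exp h * (p * exp h)) /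
        (1 - p + p * exp h)^2 := by
    intro h
    have hA0 := A_pos hp0 hp1 h
    rw [sub_nonneg, div_le_iff₀ (by positivity)]
    nlinarith [sq_nonneg ((1-p) - p * exp h), exp_pos h]
  have hGmono : Monotone G :=
    monotone_of_deriv_nonneg (fun h => (hG' h).differentiableAt)
      (fun h => by rw [(hG' h).deriv]; exact hG'nonneg h)
  have hG0 : G 0 = 0 := by
    simp [hGdef]
  have hgd : Differentiable ℝ g := fun h => (hg' h).differentiableAt
  have hmono : MonotoneOn g (Set.Ici 0) := by
    apply monotoneOn_of_deriv_nonneg (convex_Ici 0) hgd.continuous.continuousOn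
      (hgd.differentiableOn)
    intro y hy
    rw [(hg' y).deriv]
    rw [← hG0]
    exact hGmono (le_of_lt (by simpa using hy))
  have hanti : AntitoneOn g (Set.Iic 0) := by
    apply antitoneOn_of_deriv_nonpos (convex_Iic 0) hgd.continuous.continuousOn
      (hgd.differentiableOn)
    intro y hy
    rw [(hg' y).deriv]
    rw [← hG0]
    exact hGmono (le_of_lt (by simpa using hy))
  have hg0 : g 0 = 0 := by simp [hg, hφ]
  have : 0 ≤ g h := by
    rcases le_or_gt 0 h with hh | hh
    · rw [← hg0]; exact hmono Set.self_mem_Ici hh hh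
    · rw [← hg0]; exact hanti hh.le Set.self_mem_Iic hh.le
  simp only [hg, sub_nonneg] at this
  exact this

/-- **Hoeffding's lemma**. -/
lemma hoeffding_mgf {Ω : Type*} [MeasurableSpace Ω] (μ : Measure Ω) [IsProbabilityMeasure μ]
    {X : Ω → ℝ} (hX : Measurable X) {a b : ℝ} (t : ℝ)
    (hab : ∀ᵐ ω ∂μ, X ω ∈ Set.Icc a b) (hmean : ∫ ω, X ω ∂μ = 0) :
    ProbabilityTheory.mgf X μ t ≤ exp (t^2 * (b-a)^2 / 8) := by
  have hXint : Integrable X μ := by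
    refine Integrable.mono' (integrable_const (max |a| |b|)) hX.aestronglyMeasurable
      (hab.mono fun ω h => ?_)
    rw [norm_eq_abs]
    refine abs_le.2 ⟨?_, h.2.trans ((le_abs_self b).trans (le_max_right _ _))⟩
    calc -(max |a| |b|) ≤ -|a| := neg_le_neg (le_max_left _ _)
      _ ≤ a := neg_abs_le a
      _ ≤ X ω := h.1
  obtain ⟨ω₀, hω₀⟩ := hab.exists
  have hle : a ≤ b := hω₀.1.trans hω₀.2
  have ha0 : a ≤ 0 := by
    have := integral_mono_ae (integrable_const a) hXint (hab.mono fun ω h => h.1)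
    simpa [hmean] using this
  have hb0 : 0 ≤ b := by
    have := integral_mono_ae hXint (integrable_const b) (hab.mono fun ω h => h.2)
    simpa [hmean] using this
  rcases eq_or_lt_of_le hle with heq | hlt
  · -- a = b = 0, X = 0 a.e.
    have ha : a = 0 := le_antisymm ha0 (heq ▸ hb0)
    have hb : b = 0 := heq ▸ ha
    have hX0 : ∀ᵐ ω ∂μ, exp (t * X ω) = 1 := hab.mono fun ω h => by
      have : X ω = 0 := le_antisymm (hb ▸ h.2) (ha ▸ h.1)
      simp [this]
    have : ProbabilityTheory.mgf X μ t = 1 := by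
      rw [ProbabilityTheory.mgf, integral_congr_ae hX0]
      simp
    rw [this]
    exact one_le_exp (by positivity)
  · have hba : (0:ℝ) < b - a := sub_pos.2 hlt
    set c1 := exp (t*a) with hc1
    set c2 := exp (t*b) with hc2
    set K := (c2 - c1)/(b-a) with hK
    set C := (b*c1 - a*c2)/(b-a) with hC
    have hconv : ∀ u ∈ Set.Icc a b, exp (t*u) ≤ C + K * u := by
      intro u hu
      have hl : 0 ≤ (b-u)/(b-a) := div_nonneg (by linarith [hu.2]) hba.le
      have hr : 0 ≤ (u-a)/(b-a) := div_nonneg (by linarith [hu.1]) hba.le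
      have hlr : (b-u)/(b-a) + (u-a)/(b-a) = 1 := by field_simp; ring
      have hcv := convexOn_exp.2 (Set.mem_univ (t*a)) (Set.mem_univ (t*b)) hl hr hlr
      rw [smul_eq_mul, smul_eq_mul, smul_eq_mul, smul_eq_mul] at hcv
      have harg : (b-u)/(b-a) * (t*a) + (u-a)/(b-a) * (t*b) = t*u := by
        field_simp; ring
      rw [harg] at hcv
      refine hcv.trans (le_of_eq ?_)
      rw [hK, hC]
      field_simp
      rw [hc1, hc2, mul_comm t a, mul_comm t b]; ring
    have hint_exp : Integrable (fun ω => exp (t * X ω)) μ := by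
      refine Integrable.mono' (integrable_const (max c1 c2))
        ((hX.const_mul t).exp.aestronglyMeasurable) (hab.mono fun ω h => ?_)
      rw [norm_of_nonneg (exp_pos _).le]
      rcases le_or_gt 0 t with ht | ht
      · exact le_max_of_le_right (exp_le_exp.2 (mul_le_mul_of_nonneg_left h.2 ht))
      · exact le_max_of_le_left (exp_le_exp.2 (by nlinarith [h.1]))
    have h1 : ProbabilityTheory.mgf X μ t ≤ ∫ ω, (C + K * X ω) ∂μ :=
      integral_mono_ae hint_exp ((integrable_const C).add (hXint.const_mul K))
        (hab.mono fun ω h => hconv _ h)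
    have h2 : ∫ ω, (C + K * X ω) ∂μ = C := by
      rw [integral_add (integrable_const C) (hXint.const_mul K), integral_const,
        MeasureTheory.integral_const_mul, hmean]
      simp
    set p := -a/(b-a) with hp
    set h := t*(b-a) with hh
    have hp0 : 0 ≤ p := div_nonneg (neg_nonneg.2 ha0) hba.le
    have hp1 : p ≤ 1 := by rw [hp, div_le_one hba]; linarith
    have e1 : c2 = c1 * exp h := by rw [hc1, hc2, hh, ← exp_add]; congr 1; ring
    have hCeq : C = c1 * (1 - p + p * exp h) := by
      rw [hC, e1, hp]
      field_simp
      ring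
    have hta : t*a = -(p*h) := by rw [hp, hh]; field_simp
    calc ProbabilityTheory.mgf X μ t ≤ C := h1.trans_eq h2
      _ = exp (-(p*h) + Real.log (1 - p + p * exp h)) := by
          rw [hCeq, exp_add, exp_log (A_pos hp0 hp1 h), hc1, hta]
      _ ≤ exp (h^2/8) := exp_le_exp.2 (key_ineq hp0 hp1 h)
      _ = exp (t^2*(b-a)^2/8) := by rw [hh]; ring_nf

/-- Lemma 3.2 of Calafiore–El Ghaoui, Hoeffding-type bound. -/
theorem stmt6 {n : ℕ} (α : ℝ) (hα : α ∈ Set.Ioo (0:ℝ) 1)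
    (x μstar slostar shistar : Fin n → ℝ) (hs : slostar ≤ shistar)
    (hineq : dotv μstar x + Real.sqrt ((1/2) * Real.log (1 / α)) *
      euclNorm ((Matrix.diagonal (shistar - slostar)).mulVec x) ≤ 0) :
    ∀ (P : Measure (Fin n → ℝ)), IsProbabilityMeasure P →
      memPind μstar slostar shistar P →
      ENNReal.ofReal (1 - α) ≤ P {a | dotv a x ≤ 0} := by
  rintro P hP ⟨hind, hmean, hsupp⟩
  classical
  set c : Fin n → ℝ := fun i => (shistar i - slostar i) * x i with hc
  set D := ∑ i, (c i)^2 with hD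
  have hnorm : euclNorm ((Matrix.diagonal (shistar - slostar)).mulVec x) = Real.sqrt D := by
    unfold euclNorm
    congr 1
    refine Finset.sum_congr rfl fun i _ => ?_
    rw [Matrix.mulVec_diagonal]
    simp [hc]
  have hD0 : 0 ≤ D := Finset.sum_nonneg fun i _ => sq_nonneg _
  -- a.e. coordinate bounds
  have hae : ∀ i, ∀ᵐ a ∂P, a i ∈ Set.Icc (slostar i) (shistar i) := by
    intro i
    have hms : MeasurableSet {a : Fin n → ℝ | a i ∈ Set.Icc (slostar i) (shistar i)} :=
      (measurable_pi_apply i) measurableSet_Icc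
    rw [ae_iff, ← Set.compl_setOf]
    rw [measure_compl hms (measure_ne_top _ _), hsupp i, measure_univ, tsub_self]
  have hint : ∀ i, Integrable (fun a => a i) P := by
    intro i
    refine Integrable.mono' (integrable_const (max |slostar i| |shistar i|))
      (measurable_pi_apply i).aestronglyMeasurable ((hae i).mono fun a h => ?_)
    rw [norm_eq_abs]
    exact abs_le_max_abs_abs h.1 h.2
  set Z : Fin n → (Fin n → ℝ) → ℝ := fun i a => (a i - μstar i) * x i with hZ
  have hZmeas : ∀ i, Measurable (Z i) := fun i =>
    ((measurable_pi_apply i).sub_const _).mul_const _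
  have hZind : iIndepFun (m := fun _ => inferInstance) Z P :=
    hind.comp (fun i y => (y - μstar i) * x i)
      (fun i => (measurable_id.sub_const _).mul_const _)
  have hZmean : ∀ i, ∫ a, Z i a ∂P = 0 := by
    intro i
    rw [hZ]
    simp only
    rw [MeasureTheory.integral_mul_const, integral_sub (hint i) (integrable_const _),
      integral_const, hmean i]
    simp
  set m : Fin n → ℝ := fun i => min (slostar i * x i) (shistar i * x i) - μstar i * x i with hm
  set M : Fin n → ℝ := fun i => max (slostar i * x i) (shistar i * x i) - μstar i * x i with hM
  have hZae : ∀ i, ∀ᵐ a ∂P, Z i a ∈ Set.Icc (m i) (M i) := by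
    intro i
    refine (hae i).mono fun a ha => ?_
    have h1 : min (slostar i * x i) (shistar i * x i) ≤ a i * x i ∧
        a i * x i ≤ max (slostar i * x i) (shistar i * x i) := by
      rcases le_or_gt 0 (x i) with hx | hx
      · exact ⟨(min_le_left _ _).trans (mul_le_mul_of_nonneg_right ha.1 hx),
          le_max_of_le_right (mul_le_mul_of_nonneg_right ha.2 hx)⟩
      · exact ⟨(min_le_right _ _).trans (mul_le_mul_of_nonpos_right ha.2 hx.le),
          le_max_of_le_left (mul_le_mul_of_nonpos_right ha.1 hx.le)⟩
    have h2 : Z i a = a i * x i - μstar i * x i := by rw [hZ]; ring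
    exact ⟨by rw [h2, hm]; simp only; linarith [h1.1], by rw [h2, hM]; simp only; linarith [h1.2]⟩
  have hMm : ∀ i, (M i - m i)^2 = (c i)^2 := by
    intro i
    rw [hM, hm, hc]
    simp only
    rcases le_total (slostar i * x i) (shistar i * x i) with h | h
    · rw [max_eq_right h, min_eq_left h]; ring
    · rw [max_eq_left h, min_eq_right h]; ring
  rcases hD0.lt_or_eq with hDpos | hDzero
  · -- D > 0 : Chernoff bound
    set t := -(dotv μstar x) with htdef
    have hL : 0 < Real.log (1/α) := Real.log_pos (by rw [lt_div_iff₀ hα.1]; linarith [hα.2])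
    have ht : Real.sqrt ((1/2) * Real.log (1/α)) * Real.sqrt D ≤ t := by
      rw [hnorm] at hineq; rw [htdef]; linarith
    have htpos : 0 < t :=
      lt_of_lt_of_le (mul_pos (sqrt_pos.2 (by positivity)) (sqrt_pos.2 hDpos)) ht
    have ht2 : (1/2) * Real.log (1/α) * D ≤ t^2 := by
      have h1 : Real.sqrt ((1/2) * Real.log (1/α)) * Real.sqrt D
          = Real.sqrt ((1/2) * Real.log (1/α) * D) := (Real.sqrt_mul (by positivity) _).symm
      rw [h1] at ht
      have h2 := Real.sq_sqrt (show (0:ℝ) ≤ (1/2) * Real.log (1/α) * D by positivity)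
      nlinarith [Real.sqrt_nonneg ((1/2) * Real.log (1/α) * D)]
    set s := 4*t/D with hsdef
    have hs : 0 < s := by positivity
    have hint_exp : ∀ i, Integrable (fun a => exp (s * Z i a)) P := by
      intro i
      refine Integrable.mono' (integrable_const (exp (|s| * max |m i| |M i|)))
        (((hZmeas i).const_mul s).exp.aestronglyMeasurable) ((hZae i).mono fun a h => ?_)
      rw [norm_of_nonneg (exp_pos _).le]
      refine exp_le_exp.2 ?_
      calc s * Z i a ≤ |s * Z i a| := le_abs_self _
        _ = |s| * |Z i a| := abs_mul _ _
        _ ≤ |s| * max |m i| |M i| :=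
            mul_le_mul_of_nonneg_left (abs_le_max_abs_abs h.1 h.2) (abs_nonneg s)
    have hmgf_le : mgf (∑ i, Z i) P s ≤ exp (s^2 * D / 8) := by
      rw [hZind.mgf_sum hZmeas Finset.univ]
      calc ∏ i, mgf (Z i) P s ≤ ∏ i, exp (s^2 * (c i)^2 / 8) := by
            refine Finset.prod_le_prod (fun i _ => mgf_nonneg) fun i _ => ?_
            have := hoeffding_mgf P (hZmeas i) s (hZae i) (hZmean i)
            rwa [hMm i] at this
        _ = exp (∑ i, s^2 * (c i)^2 / 8) := by rw [← Real.exp_sum]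
        _ = exp (s^2 * D / 8) := by rw [← Finset.sum_div, ← Finset.mul_sum]
    have hint_sum : Integrable (fun a => exp (s * (∑ i, Z i) a)) P :=
      hZind.integrable_exp_mul_sum hZmeas (fun i _ => hint_exp i)
    have chernoff := ProbabilityTheory.measure_ge_le_exp_mul_mgf (μ := P) (X := ∑ i, Z i)
      t hs.le hint_sum
    have hfinal : (P {a | t ≤ (∑ i, Z i) a}).toReal ≤ α := by
      have h3 : exp (-s*t) * mgf (∑ i, Z i) P s ≤ exp (-s*t + s^2*D/8) := by
        rw [exp_add]
        exact mul_le_mul_of_nonneg_left hmgf_le (exp_pos _).le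
      have h4 : -s*t + s^2*D/8 = -(2*t^2/D) := by
        rw [hsdef, div_pow]
        field_simp
        ring
      have h5 : -(2*t^2/D) ≤ Real.log α := by
        have : Real.log α = -Real.log (1/α) := by
          rw [one_div, Real.log_inv, neg_neg]
        rw [this, neg_le_neg_iff]
        rw [le_div_iff₀ hDpos]
        linarith
      calc (P {a | t ≤ (∑ i, Z i) a}).toReal ≤ exp (-s*t) * mgf (∑ i, Z i) P s := chernoff
        _ ≤ exp (-s*t + s^2*D/8) := h3
        _ = exp (-(2*t^2/D)) := by rw [h4]
        _ ≤ exp (Real.log α) := exp_le_exp.2 h5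
        _ = α := Real.exp_log hα.1
    have hW : ∀ a, (∑ i, Z i) a = dotv a x + t := by
      intro a
      calc (∑ i, Z i) a = ∑ i, (a i * x i - μstar i * x i) := by
            rw [Finset.sum_apply]
            exact Finset.sum_congr rfl fun i _ => by rw [hZ]; ring
        _ = dotv a x - dotv μstar x := by rw [Finset.sum_sub_distrib]; rfl
        _ = dotv a x + t := by rw [htdef]; ring
    have hdotv_meas : Measurable (fun a : Fin n → ℝ => dotv a x) := by
      unfold dotv
      exact Finset.measurable_sum _ fun i _ => (measurable_pi_apply i).mul_const _
    have hSmeas : MeasurableSet {a : Fin n → ℝ | dotv a x ≤ 0} :=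
      measurableSet_le hdotv_meas measurable_const
    have hsub : {a : Fin n → ℝ | dotv a x ≤ 0}ᶜ ⊆ {a | t ≤ (∑ i, Z i) a} := by
      intro a ha
      simp only [Set.mem_compl_iff, Set.mem_setOf_eq, not_le] at ha
      simp only [Set.mem_setOf_eq, hW a]
      linarith
    have hcompl : P {a : Fin n → ℝ | dotv a x ≤ 0}ᶜ ≤ ENNReal.ofReal α := by
      refine (measure_mono hsub).trans ?_
      rw [← ENNReal.ofReal_toReal (measure_ne_top P _)]
      exact ENNReal.ofReal_le_ofReal hfinal
    have h1 : (1:ENNReal) ≤ P {a : Fin n → ℝ | dotv a x ≤ 0} + ENNReal.ofReal α := by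
      calc (1:ENNReal) = P Set.univ := (measure_univ (μ := P)).symm
        _ = P {a : Fin n → ℝ | dotv a x ≤ 0} + P {a : Fin n → ℝ | dotv a x ≤ 0}ᶜ :=
            (measure_add_measure_compl hSmeas).symm
        _ ≤ _ := add_le_add_right hcompl _
    rw [ENNReal.ofReal_sub _ hα.1.le, ENNReal.ofReal_one, tsub_le_iff_right]
    exact h1
  · -- D = 0 : the constraint holds a.s.
    have hczero : ∀ i, c i = 0 := by
      intro i
      have := (Finset.sum_eq_zero_iff_of_nonneg (fun j _ => sq_nonneg (c j))).1 hDzero.symm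
        i (Finset.mem_univ i)
      exact sq_eq_zero_iff.1 this
    have hZ0 : ∀ i, ∀ᵐ a ∂P, Z i a = 0 := by
      intro i
      rcases mul_eq_zero.1 (hczero i) with h0 | h0
      · -- shistar i = slostar i
        have heqs : shistar i = slostar i := by linarith [sub_eq_zero.1 h0]
        have hconst : ∀ᵐ a ∂P, a i = slostar i := (hae i).mono fun a ha => by
          have := ha.2
          rw [heqs] at this
          exact le_antisymm this ha.1
        have hμ : μstar i = slostar i := by
          rw [← hmean i, integral_congr_ae (hconst.mono fun a ha => ha)]
          simp
        exact hconst.mono fun a ha => by rw [hZ]; simp only; rw [ha, hμ]; ring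
      · exact Filter.Eventually.of_forall fun a => by rw [hZ]; simp only; rw [h0]; ring
    have hall : ∀ᵐ a ∂P, ∀ i, Z i a = 0 := (MeasureTheory.ae_all_iff).2 hZ0
    have hμx : dotv μstar x ≤ 0 := by
      rw [hnorm, ← hDzero, Real.sqrt_zero, mul_zero, add_zero] at hineq
      exact hineq
    have hae_le : ∀ᵐ a ∂P, a ∈ {a : Fin n → ℝ | dotv a x ≤ 0} := by
      refine hall.mono fun a ha => ?_
      have : dotv a x = dotv μstar x := by
        unfold dotv
        calc ∑ i, a i * x i = ∑ i, (Z i a + μstar i * x i) :=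
              Finset.sum_congr rfl fun i _ => by rw [hZ]; ring
          _ = ∑ i, μstar i * x i := Finset.sum_congr rfl fun i _ => by rw [ha i]; ring
      simp only [Set.mem_setOf_eq, this]
      exact hμx
    have : P {a : Fin n → ℝ | dotv a x ≤ 0} = 1 := by
      have h7 : {a : Fin n → ℝ | dotv a x ≤ 0} =ᵐ[P] (Set.univ : Set (Fin n → ℝ)) :=
        Filter.eventuallyEq_univ.mpr hae_le
      exact (measure_congr h7).trans measure_univ
    rw [this]
    exact ENNReal.ofReal_le_one.2 (by linarith [hα.1])
end
end

section
/- Let α ∈ (0,1), x ∈ ℝⁿ, μ* ∈ ℝⁿ, and let σ*² ∈ ℝⁿ be a vector of nonnegative variances. Let D* := diag(√(σ*²₁),…,√(σ*²ₙ)). Then every probability measure P on ℝⁿ with finite second moments, mean μ* and covariance matrix diag(σ*²) (i.e., with uncorrelated coordinates of variances σ*²ᵢ) satisfies P{a ∈ ℝⁿ : aᵀx ≤ 0} ≥ 1 − α if and only if μ*ᵀx + √((1−α)/α)·‖D*x‖₂ ≤ 0. -/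
open MeasureTheory

noncomputable section

lemma cantelli_bound {β : Type*} [MeasurableSpace β] (P : Measure β) [IsProbabilityMeasure P]
    (Y : β → ℝ) (hYmeas : Measurable Y) (hYint : Integrable Y P) {m v α : ℝ}
    (hY2int : Integrable (fun a => (Y a - m) ^ 2) P)
    (hmean : ∫ a, Y a ∂P = m)
    (hv : ∫ a, (Y a - m) ^ 2 ∂P = v)
    (hα : 0 < α) (hα1 : α < 1) (hv0 : 0 ≤ v)
    (hineq : m + Real.sqrt ((1 - α) / α) * Real.sqrt v ≤ 0) :
    ENNReal.ofReal (1 - α) ≤ P {a | Y a ≤ 0} := by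
  have hk : 0 < Real.sqrt ((1 - α) / α) :=
    Real.sqrt_pos.2 (div_pos (by linarith) hα)
  have key : P {a | 0 < Y a} ≤ ENNReal.ofReal α := by
    rcases eq_or_lt_of_le hv0 with hv0' | hvpos
    · -- v = 0 case
      have hm0 : m ≤ 0 := by
        have : Real.sqrt v = 0 := by rw [← hv0']; exact Real.sqrt_zero
        rw [this] at hineq; linarith [hineq]
      have hzero : (fun a => (Y a - m) ^ 2) =ᵐ[P] 0 := by
        rw [← integral_eq_zero_iff_of_nonneg (fun a => sq_nonneg _) hY2int, hv, hv0']
      have hnull : P {a | ¬ (Y a - m) ^ 2 = 0} = 0 := by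
        have := hzero
        rw [Filter.EventuallyEq, ae_iff] at this
        simpa using this
      have hsub : {a | 0 < Y a} ⊆ {a | ¬ (Y a - m) ^ 2 = 0} := by
        intro a ha
        simp only [Set.mem_setOf_eq] at ha ⊢
        intro h
        have : Y a = m := by nlinarith [sq_nonneg (Y a - m)]
        linarith
      calc P {a | 0 < Y a} ≤ P {a | ¬ (Y a - m) ^ 2 = 0} := measure_mono hsub
        _ = 0 := hnull
        _ ≤ _ := zero_le
    · -- v > 0 case
      have hsv : 0 < Real.sqrt v := Real.sqrt_pos.2 hvpos
      have hm : m ≤ -(Real.sqrt ((1 - α) / α) * Real.sqrt v) := by linarith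
      set t : ℝ := -m with ht
      have htpos : 0 < t := by
        have : 0 < Real.sqrt ((1 - α) / α) * Real.sqrt v := mul_pos hk hsv
        simp only [ht]; linarith
      have ht2 : (1 - α) / α * v ≤ t ^ 2 := by
        have h1 : Real.sqrt ((1 - α) / α) * Real.sqrt v ≤ t := by simp only [ht]; linarith
        have h2 : (Real.sqrt ((1 - α) / α) * Real.sqrt v) ^ 2 ≤ t ^ 2 :=
          pow_le_pow_left₀ (by positivity) h1 2
        calc (1 - α) / α * v = (Real.sqrt ((1 - α) / α)) ^ 2 * (Real.sqrt v) ^ 2 := by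
              rw [Real.sq_sqrt (le_of_lt (div_pos (by linarith) hα)), Real.sq_sqrt hv0]
          _ = (Real.sqrt ((1 - α) / α) * Real.sqrt v) ^ 2 := by ring
          _ ≤ t ^ 2 := h2
      set u : ℝ := v / t with hu
      have hut : u * t = v := div_mul_cancel₀ v htpos.ne'
      have hupos : 0 < u := div_pos hvpos htpos
      set c : ℝ := (t + u) ^ 2 with hc
      have hcpos : 0 < c := by positivity
      have hgint : Integrable (fun a => (Y a - m + u) ^ 2) P := by
        have heq : (fun a => (Y a - m + u) ^ 2)
            = fun a => (Y a - m) ^ 2 + (2 * u) * Y a + (u ^ 2 - 2 * u * m) := by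
          funext a; ring
        rw [heq]
        exact (hY2int.add (hYint.const_mul _)).add (integrable_const _)
      have hgval : ∫ a, (Y a - m + u) ^ 2 ∂P = v + 2 * u * (∫ a, Y a ∂P) + (u ^ 2 - 2 * u * m) := by
        have heq : (fun a => (Y a - m + u) ^ 2)
            = fun a => (Y a - m) ^ 2 + (2 * u) * Y a + (u ^ 2 - 2 * u * m) := by
          funext a; ring
        rw [heq]
        rw [integral_add (f := fun a => (Y a - m) ^ 2 + 2 * u * Y a)
          (g := fun _ => u ^ 2 - 2 * u * m) (hY2int.add (hYint.const_mul _)) (integrable_const _)]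
        rw [integral_add (f := fun a => (Y a - m) ^ 2) (g := fun a => 2 * u * Y a)
          hY2int (hYint.const_mul _), hv, integral_const, integral_const_mul]
        simp
      have hg : ∫ a, (Y a - m + u) ^ 2 ∂P = v + u ^ 2 := by
        rw [hgval, hmean]; ring
      have markov := mul_meas_ge_le_integral_of_nonneg
        (ae_of_all P fun a => sq_nonneg (Y a - m + u)) hgint c
      rw [hg] at markov
      have hsub : {a | 0 < Y a} ⊆ {a | c ≤ (Y a - m + u) ^ 2} := by
        intro a ha
        simp only [Set.mem_setOf_eq] at ha ⊢
        have h1 : t + u ≤ Y a - m + u := by simp only [ht]; linarith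
        calc c = (t + u) ^ 2 := hc
          _ ≤ (Y a - m + u) ^ 2 := pow_le_pow_left₀ (by positivity) h1 2
      have htR : (P {a | 0 < Y a}).toReal ≤ (P {a | c ≤ (Y a - m + u) ^ 2}).toReal :=
        ENNReal.toReal_mono (measure_ne_top _ _) (measure_mono hsub)
      have hq : c * (P {a | 0 < Y a}).toReal ≤ v + u ^ 2 :=
        le_trans (mul_le_mul_of_nonneg_left htR hcpos.le) markov
      have h5 : (1 - α) * u ≤ α * t := by
        have h6 : (1 - α) * v ≤ α * t ^ 2 := by
          have h7 : α * ((1 - α) / α * v) ≤ α * t ^ 2 :=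
            mul_le_mul_of_nonneg_left ht2 hα.le
          calc (1 - α) * v = α * ((1 - α) / α * v) := by field_simp
            _ ≤ α * t ^ 2 := h7
        have h8 : (1 - α) * u * t ≤ α * t * t := by
          calc (1 - α) * u * t = (1 - α) * v := by rw [mul_assoc, hut]
            _ ≤ α * t ^ 2 := h6
            _ = α * t * t := by ring
        exact le_of_mul_le_mul_right h8 htpos
      have hkey : v + u ^ 2 ≤ α * c := by
        have h9 : (1 - α) * u * (t + u) ≤ α * t * (t + u) :=
          mul_le_mul_of_nonneg_right h5 (by positivity)
        simp only [hc]
        nlinarith [hut]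
      have hfinal : (P {a | 0 < Y a}).toReal ≤ α := by
        have h10 : c * (P {a | 0 < Y a}).toReal ≤ c * α := by
          calc c * (P {a | 0 < Y a}).toReal ≤ v + u ^ 2 := hq
            _ ≤ α * c := hkey
            _ = c * α := mul_comm _ _
        exact le_of_mul_le_mul_left h10 hcpos
      calc P {a | 0 < Y a} = ENNReal.ofReal (P {a | 0 < Y a}).toReal :=
            (ENNReal.ofReal_toReal (measure_ne_top _ _)).symm
        _ ≤ ENNReal.ofReal α := ENNReal.ofReal_le_ofReal hfinal
  have hset : {a | Y a ≤ 0} = {a | 0 < Y a}ᶜ := by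
    ext a; simp [not_lt]
  have hms : MeasurableSet {a | 0 < Y a} := measurableSet_lt measurable_const hYmeas
  rw [hset, measure_compl hms (measure_ne_top _ _), measure_univ]
  have h11 : ENNReal.ofReal (1 - α) + ENNReal.ofReal α ≤ 1 := by
    rw [← ENNReal.ofReal_add (by linarith) hα.le]
    norm_num
  calc ENNReal.ofReal (1 - α) ≤ 1 - ENNReal.ofReal α := ENNReal.le_sub_of_add_le_right ENNReal.ofReal_ne_top h11
    _ ≤ 1 - P {a | 0 < Y a} := tsub_le_tsub le_rfl key


def dMeas {n : ℕ} {Ω : Type} [Fintype Ω] (w : Ω → ℝ) (φ : Ω → Fin n → ℝ) :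
    Measure (Fin n → ℝ) := ∑ ω : Ω, ENNReal.ofReal (w ω) • Measure.dirac (φ ω)

variable {n : ℕ} {Ω : Type} [Fintype Ω] (w : Ω → ℝ) (φ : Ω → Fin n → ℝ)

lemma dMeas_apply (S : Set (Fin n → ℝ)) :
    dMeas w φ S = ∑ ω : Ω, ENNReal.ofReal (w ω) * S.indicator 1 (φ ω) := by
  rw [dMeas, Measure.finset_sum_apply]
  simp [Measure.smul_apply, smul_eq_mul]

lemma dMeas_integrable (f : (Fin n → ℝ) → ℝ) : Integrable f (dMeas w φ) := by
  rw [dMeas]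
  refine integrable_finset_sum_measure.2 fun ω _ => ?_
  refine Integrable.smul_measure ?_ ENNReal.ofReal_ne_top
  refine (integrable_const (f (φ ω))).congr ?_
  rw [MeasureTheory.ae_dirac_eq]
  exact Filter.eventually_pure.2 rfl

lemma dMeas_integral (hw : ∀ ω, 0 ≤ w ω) (f : (Fin n → ℝ) → ℝ) :
    ∫ a, f a ∂(dMeas w φ) = ∑ ω : Ω, w ω * f (φ ω) := by
  rw [dMeas, integral_finset_sum_measure (fun ω _ => ?_)]
  · refine Finset.sum_congr rfl fun ω _ => ?_
    rw [integral_smul_measure, integral_dirac, smul_eq_mul, ENNReal.toReal_ofReal (hw ω)]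
  · exact Integrable.smul_measure
      ((integrable_const (f (φ ω))).congr
        (by rw [MeasureTheory.ae_dirac_eq]; exact Filter.eventually_pure.2 rfl))
      ENNReal.ofReal_ne_top

lemma dMeas_isProb (hw : ∀ ω, 0 ≤ w ω) (hw1 : ∑ ω : Ω, w ω = 1) :
    IsProbabilityMeasure (dMeas w φ) := by
  constructor
  rw [dMeas_apply]
  simp only [Set.indicator_univ, Pi.one_apply, mul_one]
  rw [← ENNReal.ofReal_sum_of_nonneg (fun ω _ => hw ω), hw1, ENNReal.ofReal_one]

lemma construct_measure {n : ℕ} (hn : 0 < n) (μstar s y x : Fin n → ℝ)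
    (σ m p zp zm : ℝ) (hm : m = ∑ i, μstar i * x i)
    (hsx : ∀ i, s i * x i = σ * y i)
    (hyc : ∀ i j, y i * y j * (∑ k, y k ^ 2 - 1) = 0)
    (hσc : σ * (∑ k, y k ^ 2) = σ)
    (hp0 : 0 < p) (hp1 : p < 1)
    (hzm : p * zp + (1 - p) * zm = 0) (hz2 : p * zp ^ 2 + (1 - p) * zm ^ 2 = 1)
    (hpos : 0 < m + σ * zp) :
    ∃ P : Measure (Fin n → ℝ), IsProbabilityMeasure P ∧ hasFiniteSecondMoments P ∧
      meanVec P = μstar ∧ covMat P = Matrix.diagonal (fun i => s i ^ 2) ∧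
      P {a | dotv a x ≤ 0} ≤ ENNReal.ofReal (1 - p) := by
  classical
  have hN : (0:ℝ) < n := Nat.cast_pos.2 hn
  set rt : ℝ := Real.sqrt n with hrt
  have hrt2 : rt * rt = (n:ℝ) := Real.mul_self_sqrt hN.le
  set q : Bool → ℝ := fun b => if b then p else 1 - p with hq
  set z : Bool → ℝ := fun b => if b then zp else zm with hz
  set r : Bool → ℝ := fun b => if b then 1 else -1 with hr
  set B : Bool × Bool × Fin n → Fin n → ℝ := fun ω i =>
    z ω.1 * y i + r ω.2.1 * rt * ((if i = ω.2.2 then (1:ℝ) else 0) - y i * y ω.2.2) with hB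
  set w : Bool × Bool × Fin n → ℝ := fun ω => q ω.1 * (2⁻¹ * (n:ℝ)⁻¹) with hwdef
  set φ : Bool × Bool × Fin n → Fin n → ℝ := fun ω i => μstar i + s i * B ω i with hφ
  have hw : ∀ ω, 0 ≤ w ω := by
    intro ω
    have : 0 ≤ q ω.1 := by
      rcases ω.1 <;> simp [hq] <;> linarith
    positivity
  have hw1 : ∑ ω : Bool × Bool × Fin n, w ω = 1 := by
    simp only [hwdef, hq, Fintype.sum_prod_type, Fintype.sum_bool, Bool.false_eq_true, if_true, if_false,
      Finset.sum_const, Finset.card_univ, Fintype.card_fin, nsmul_eq_mul]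
    field_simp
    ring
  refine ⟨dMeas w φ, dMeas_isProb w φ hw hw1, ⟨fun i => dMeas_integrable w φ _,
    fun i j => dMeas_integrable w φ _⟩, ?_, ?_, ?_⟩
  · -- mean
    funext i
    show ∫ a, a i ∂(dMeas w φ) = μstar i
    rw [dMeas_integral w φ hw (fun a => a i)]
    simp only [hwdef, hφ, hB, hq, hz, hr, Fintype.sum_prod_type, Fintype.sum_bool,
      Bool.false_eq_true, if_true, if_false]
    simp only [← Finset.sum_add_distrib]
    have step : ∀ k ∈ (Finset.univ : Finset (Fin n)),
        (p * (2⁻¹ * (n:ℝ)⁻¹) * (μstar i + s i * (zp * y i + 1 * rt * ((if i = k then (1:ℝ) else 0) - y i * y k)))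
        + p * (2⁻¹ * (n:ℝ)⁻¹) * (μstar i + s i * (zp * y i + (-1) * rt * ((if i = k then (1:ℝ) else 0) - y i * y k)))
        + ((1-p) * (2⁻¹ * (n:ℝ)⁻¹) * (μstar i + s i * (zm * y i + 1 * rt * ((if i = k then (1:ℝ) else 0) - y i * y k)))
        + (1-p) * (2⁻¹ * (n:ℝ)⁻¹) * (μstar i + s i * (zm * y i + (-1) * rt * ((if i = k then (1:ℝ) else 0) - y i * y k)))))
        = (n:ℝ)⁻¹ * μstar i + ((n:ℝ)⁻¹ * (s i * y i)) * (p * zp + (1 - p) * zm) := by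
      intro k _
      ring
    rw [Finset.sum_congr rfl step, hzm]
    simp only [mul_zero, add_zero, Finset.sum_const, Finset.card_univ, Fintype.card_fin,
      nsmul_eq_mul]
    field_simp
  · -- covariance
    have hmeanP : meanVec (dMeas w φ) = μstar := by
      funext i
      show ∫ a, a i ∂(dMeas w φ) = μstar i
      rw [dMeas_integral w φ hw (fun a => a i)]
      simp only [hwdef, hφ, hB, hq, hz, hr, Fintype.sum_prod_type, Fintype.sum_bool,
        Bool.false_eq_true, if_true, if_false]
      simp only [← Finset.sum_add_distrib]
      have step : ∀ k ∈ (Finset.univ : Finset (Fin n)),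
          (p * (2⁻¹ * (n:ℝ)⁻¹) * (μstar i + s i * (zp * y i + 1 * rt * ((if i = k then (1:ℝ) else 0) - y i * y k)))
          + p * (2⁻¹ * (n:ℝ)⁻¹) * (μstar i + s i * (zp * y i + (-1) * rt * ((if i = k then (1:ℝ) else 0) - y i * y k)))
          + ((1-p) * (2⁻¹ * (n:ℝ)⁻¹) * (μstar i + s i * (zm * y i + 1 * rt * ((if i = k then (1:ℝ) else 0) - y i * y k)))
          + (1-p) * (2⁻¹ * (n:ℝ)⁻¹) * (μstar i + s i * (zm * y i + (-1) * rt * ((if i = k then (1:ℝ) else 0) - y i * y k)))))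
          = (n:ℝ)⁻¹ * μstar i + ((n:ℝ)⁻¹ * (s i * y i)) * (p * zp + (1 - p) * zm) := by
        intro k _
        ring
      rw [Finset.sum_congr rfl step, hzm]
      simp only [mul_zero, add_zero, Finset.sum_const, Finset.card_univ, Fintype.card_fin,
        nsmul_eq_mul]
      field_simp
    ext i j
    rw [covMat, hmeanP]
    show ∫ a, (a i - μstar i) * (a j - μstar j) ∂(dMeas w φ) = _
    rw [dMeas_integral w φ hw (fun a => (a i - μstar i) * (a j - μstar j))]
    simp only [hwdef, hφ, hB, hq, hz, hr, Fintype.sum_prod_type, Fintype.sum_bool,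
      Bool.false_eq_true, if_true, if_false]
    simp only [← Finset.sum_add_distrib]
    have step : ∀ k ∈ (Finset.univ : Finset (Fin n)),
        (p * (2⁻¹ * (n:ℝ)⁻¹) * ((μstar i + s i * (zp * y i + 1 * rt * ((if i = k then (1:ℝ) else 0) - y i * y k)) - μstar i) * (μstar j + s j * (zp * y j + 1 * rt * ((if j = k then (1:ℝ) else 0) - y j * y k)) - μstar j))
        + p * (2⁻¹ * (n:ℝ)⁻¹) * ((μstar i + s i * (zp * y i + (-1) * rt * ((if i = k then (1:ℝ) else 0) - y i * y k)) - μstar i) * (μstar j + s j * (zp * y j + (-1) * rt * ((if j = k then (1:ℝ) else 0) - y j * y k)) - μstar j))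
        + ((1-p) * (2⁻¹ * (n:ℝ)⁻¹) * ((μstar i + s i * (zm * y i + 1 * rt * ((if i = k then (1:ℝ) else 0) - y i * y k)) - μstar i) * (μstar j + s j * (zm * y j + 1 * rt * ((if j = k then (1:ℝ) else 0) - y j * y k)) - μstar j))
        + (1-p) * (2⁻¹ * (n:ℝ)⁻¹) * ((μstar i + s i * (zm * y i + (-1) * rt * ((if i = k then (1:ℝ) else 0) - y i * y k)) - μstar i) * (μstar j + s j * (zm * y j + (-1) * rt * ((if j = k then (1:ℝ) else 0) - y j * y k)) - μstar j))))
        = ((n:ℝ)⁻¹ * (s i * s j * (y i * y j))) * (p * zp ^ 2 + (1 - p) * zm ^ 2)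
          + ((n:ℝ)⁻¹ * (rt * rt)) * (s i * s j *
            (((if i = k then (1:ℝ) else 0) - y i * y k) * ((if j = k then (1:ℝ) else 0) - y j * y k))) := by
      intro k _
      ring
    rw [Finset.sum_congr rfl step]
    simp only [hz2, hrt2, mul_one, inv_mul_cancel₀ hN.ne', one_mul]
    rw [Finset.sum_add_distrib]
    have e1 : ∑ k, ((if i = k then (1:ℝ) else 0) - y i * y k) * ((if j = k then (1:ℝ) else 0) - y j * y k)
        = (if i = j then (1:ℝ) else 0) - y i * y j + y i * y j * (∑ k, y k ^ 2 - 1) := by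
      have d1 : ∑ k, (if i = k then (1:ℝ) else 0) * (if j = k then (1:ℝ) else 0)
          = if i = j then (1:ℝ) else 0 := by
        by_cases h : i = j
        · subst h
          simp [Finset.sum_ite_eq]
        · rw [if_neg h]
          refine Finset.sum_eq_zero fun k _ => ?_
          by_cases hk : i = k
          · by_cases hk2 : j = k
            · exact absurd (hk.trans hk2.symm) h
            · simp [hk2]
          · simp [hk]
      have d2 : ∑ k, (if i = k then (1:ℝ) else 0) * (y j * y k) = y j * y i := by
        simp only [ite_mul, one_mul, zero_mul]
        rw [Finset.sum_ite_eq]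
        simp
      have d3 : ∑ k, (if j = k then (1:ℝ) else 0) * (y i * y k) = y i * y j := by
        simp only [ite_mul, one_mul, zero_mul]
        rw [Finset.sum_ite_eq]
        simp
      have expand : ∀ k ∈ (Finset.univ : Finset (Fin n)),
          ((if i = k then (1:ℝ) else 0) - y i * y k) * ((if j = k then (1:ℝ) else 0) - y j * y k)
          = (if i = k then (1:ℝ) else 0) * (if j = k then (1:ℝ) else 0)
            - (if i = k then (1:ℝ) else 0) * (y j * y k)
            - (if j = k then (1:ℝ) else 0) * (y i * y k)
            + (y i * y j) * y k ^ 2 := by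
        intro k _
        ring
      rw [Finset.sum_congr rfl expand]
      rw [Finset.sum_add_distrib, Finset.sum_sub_distrib, Finset.sum_sub_distrib,
        d1, d2, d3, ← Finset.mul_sum]
      ring
    have split2 : ∑ k : Fin n, s i * s j *
        (((if i = k then (1:ℝ) else 0) - y i * y k) * ((if j = k then (1:ℝ) else 0) - y j * y k))
        = s i * s j * ((if i = j then (1:ℝ) else 0) - y i * y j) := by
      rw [← Finset.mul_sum, e1]
      linear_combination (s i * s j) * hyc i j
    rw [split2]
    simp only [Finset.sum_const, Finset.card_univ, Fintype.card_fin, nsmul_eq_mul]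
    rw [Matrix.diagonal_apply]
    have hcancel : ∀ A : ℝ, (n:ℝ) * ((n:ℝ)⁻¹ * A) = A := fun A => by field_simp
    rw [hcancel]
    by_cases h : i = j
    · subst h
      rw [if_pos rfl, if_pos rfl]
      ring
    · rw [if_neg h, if_neg h]
      ring
  · -- event bound
    have hdot : ∀ ω : Bool × Bool × Fin n, dotv (φ ω) x = m + σ * z ω.1 := by
      rintro ⟨b1, b2, k2⟩
      show ∑ i, φ (b1, b2, k2) i * x i = _
      simp only [hφ, hB]
      have step : ∀ i ∈ (Finset.univ : Finset (Fin n)),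
          (μstar i + s i * (z b1 * y i + r b2 * rt * ((if i = k2 then (1:ℝ) else 0) - y i * y k2))) * x i
          = μstar i * x i + ((σ * z b1) * y i ^ 2
            + ((σ * (r b2 * rt)) * ((if i = k2 then (1:ℝ) else 0) * y i)
            + (σ * (r b2 * rt * y k2)) * (-(y i ^ 2)))) := by
        intro i _
        linear_combination (z b1 * y i + r b2 * rt * ((if i = k2 then (1:ℝ) else 0) - y i * y k2)) * hsx i
      rw [Finset.sum_congr rfl step, Finset.sum_add_distrib, Finset.sum_add_distrib,
        Finset.sum_add_distrib, ← Finset.mul_sum, ← Finset.mul_sum, ← Finset.mul_sum, ← hm]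
      have dd : ∑ i, (if i = k2 then (1:ℝ) else 0) * y i = y k2 := by
        simp only [ite_mul, one_mul, zero_mul]
        rw [Finset.sum_ite_eq']
        simp
      rw [dd]
      have dneg : ∑ i, -(y i ^ 2) = -∑ i, y i ^ 2 := by
        rw [Finset.sum_neg_distrib]
      rw [dneg]
      have goal2 : (σ * z b1) * (∑ i, y i ^ 2) + ((σ * (r b2 * rt)) * y k2
          + (σ * (r b2 * rt * y k2)) * (-(∑ i, y i ^ 2))) = σ * z b1 := by
        linear_combination (z b1 - r b2 * rt * y k2) * hσc
      linarith [goal2]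
    rw [dMeas_apply]
    have hbound : ∀ ω : Bool × Bool × Fin n,
        ENNReal.ofReal (w ω) * Set.indicator {a | dotv a x ≤ 0} 1 (φ ω)
        ≤ ENNReal.ofReal (if ω.1 = true then 0 else (1 - p) * (2⁻¹ * (n:ℝ)⁻¹)) := by
      intro ω
      by_cases h1 : ω.1 = true
      · have hnm : φ ω ∉ {a | dotv a x ≤ 0} := by
          simp only [Set.mem_setOf_eq, not_le, hdot ω, h1, hz, if_true]
          exact hpos
        rw [Set.indicator_of_notMem hnm, mul_zero]
        exact zero_le
      · rw [if_neg h1]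
        have hw' : w ω = (1 - p) * (2⁻¹ * (n:ℝ)⁻¹) := by
          have : ω.1 = false := Bool.eq_false_iff.2 (by simpa using h1)
          simp [hwdef, hq, this]
        rw [hw']
        have hind : Set.indicator {a | dotv a x ≤ 0} (1 : (Fin n → ℝ) → ENNReal) (φ ω) ≤ 1 := by
          by_cases hmem : φ ω ∈ {a | dotv a x ≤ 0}
          · rw [Set.indicator_of_mem hmem]
            exact le_rfl
          · rw [Set.indicator_of_notMem hmem]
            exact zero_le
        calc ENNReal.ofReal ((1 - p) * (2⁻¹ * (n:ℝ)⁻¹)) * Set.indicator {a | dotv a x ≤ 0} 1 (φ ω)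
            ≤ ENNReal.ofReal ((1 - p) * (2⁻¹ * (n:ℝ)⁻¹)) * 1 := mul_le_mul_right hind _
          _ = ENNReal.ofReal ((1 - p) * (2⁻¹ * (n:ℝ)⁻¹)) := mul_one _
    calc ∑ ω : Bool × Bool × Fin n,
          ENNReal.ofReal (w ω) * Set.indicator {a | dotv a x ≤ 0} 1 (φ ω)
        ≤ ∑ ω : Bool × Bool × Fin n,
          ENNReal.ofReal (if ω.1 = true then 0 else (1 - p) * (2⁻¹ * (n:ℝ)⁻¹)) :=
          Finset.sum_le_sum fun ω _ => hbound ω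
      _ = ENNReal.ofReal (∑ ω : Bool × Bool × Fin n,
          (if ω.1 = true then 0 else (1 - p) * (2⁻¹ * (n:ℝ)⁻¹))) := by
          rw [ENNReal.ofReal_sum_of_nonneg]
          intro ω _
          by_cases h1 : ω.1 = true
          · rw [if_pos h1]
          · rw [if_neg h1]
            have : (0:ℝ) ≤ 1 - p := by linarith
            positivity
      _ = ENNReal.ofReal (1 - p) := by
          congr 1
          simp only [Fintype.sum_prod_type, Fintype.sum_bool, Bool.false_eq_true, if_true,
            if_false, Finset.sum_const, Finset.card_univ, Fintype.card_fin, nsmul_eq_mul]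
          field_simp
          ring


set_option maxHeartbeats 2000000 in
/-- Lemma 5 of the paper: diagonal-covariance special case. -/
theorem stmt10 {n : ℕ} (α : ℝ) (hα : α ∈ Set.Ioo (0:ℝ) 1)
    (x μstar σ2star : Fin n → ℝ) (hσ : ∀ i, 0 ≤ σ2star i) :
    (∀ (P : Measure (Fin n → ℝ)), IsProbabilityMeasure P → hasFiniteSecondMoments P →
      meanVec P = μstar → covMat P = Matrix.diagonal σ2star →
      ENNReal.ofReal (1 - α) ≤ P {a | dotv a x ≤ 0}) ↔
    dotv μstar x + Real.sqrt ((1 - α) / α) *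
      euclNorm ((Matrix.diagonal fun i => Real.sqrt (σ2star i)).mulVec x) ≤ 0 := by
  obtain ⟨hα0, hα1⟩ := hα
  set s : Fin n → ℝ := fun i => Real.sqrt (σ2star i) with hs
  have hDx : ((Matrix.diagonal s).mulVec x) = fun i => s i * x i := by
    funext i
    rw [Matrix.mulVec_diagonal]
  have hσdef : euclNorm ((Matrix.diagonal s).mulVec x)
      = Real.sqrt (∑ i, (s i * x i) ^ 2) := by
    rw [euclNorm, hDx]
  set σ : ℝ := Real.sqrt (∑ i, (s i * x i) ^ 2) with hσs
  have hσ0 : 0 ≤ σ := Real.sqrt_nonneg _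
  have hσ2 : σ ^ 2 = ∑ i, (s i * x i) ^ 2 :=
    Real.sq_sqrt (Finset.sum_nonneg fun i _ => sq_nonneg _)
  have hs2 : ∀ i, s i ^ 2 = σ2star i := fun i => Real.sq_sqrt (hσ i)
  set m : ℝ := dotv μstar x with hmdef
  set k : ℝ := Real.sqrt ((1 - α) / α) with hkdef
  have hk0 : 0 < k := Real.sqrt_pos.2 (div_pos (by linarith) hα0)
  have hk2 : k ^ 2 = (1 - α) / α := Real.sq_sqrt (div_nonneg (by linarith) hα0.le)
  clear_value s σ m k
  rw [hσdef]
  constructor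
  · -- hard direction: ∀ P ... → inequality
    intro H
    by_contra hcon
    push_neg at hcon
    have hn : 0 < n := by
      rcases Nat.eq_zero_or_pos n with h0 | h
      · exfalso
        subst h0
        have hm0 : m = 0 := by simp [hmdef, dotv]
        have hσz : σ = 0 := by simp [hσs]
        rw [hm0, hσz, mul_zero, add_zero] at hcon
        exact lt_irrefl 0 hcon
      · exact h
    -- choose p
    obtain ⟨p, hp0, hp1, hpα, hppos⟩ :
        ∃ p : ℝ, 0 < p ∧ p < 1 ∧ α < p ∧ 0 < m + σ * Real.sqrt ((1 - p) / p) := by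
      by_cases hm : m < 0
      · have hσpos : 0 < σ := by nlinarith
        set β : ℝ := σ ^ 2 / (σ ^ 2 + m ^ 2) with hβ
        have hden : 0 < σ ^ 2 + m ^ 2 := by positivity
        have hβ1 : β < 1 := (div_lt_one hden).2 (by nlinarith)
        have hαβ : α < β := by
          rw [hβ, lt_div_iff₀ hden]
          have h1 : -m < k * σ := by linarith
          have h2 : m ^ 2 < k ^ 2 * σ ^ 2 := by nlinarith
          rw [hk2] at h2
          have h4 : α * m ^ 2 < α * ((1 - α) / α * σ ^ 2) :=
            mul_lt_mul_of_pos_left h2 hα0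
          have h5 : α * ((1 - α) / α * σ ^ 2) = (1 - α) * σ ^ 2 := by
            field_simp
          nlinarith
        refine ⟨(α + β) / 2, by linarith, by linarith, by linarith, ?_⟩
        set p := (α + β) / 2 with hp
        have hp0 : 0 < p := by linarith
        have hpβ : p < β := by linarith
        have hzp2 : Real.sqrt ((1 - p) / p) ^ 2 = (1 - p) / p :=
          Real.sq_sqrt (div_nonneg (by linarith) hp0.le)
        have hpb : p * (σ ^ 2 + m ^ 2) < σ ^ 2 := by
          rw [hβ, lt_div_iff₀ hden] at hpβ
          linarith
        have h2 : m ^ 2 < σ ^ 2 * ((1 - p) / p) := by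
          rw [mul_div_assoc' (σ ^ 2), lt_div_iff₀ hp0]
          nlinarith
        have h3 : (σ * Real.sqrt ((1 - p) / p)) ^ 2 = σ ^ 2 * ((1 - p) / p) := by
          rw [mul_pow, hzp2]
        have h4 : -m < σ * Real.sqrt ((1 - p) / p) := by
          have hnn : 0 ≤ σ * Real.sqrt ((1 - p) / p) := by positivity
          refine lt_of_pow_lt_pow_left₀ 2 hnn ?_
          rw [h3]
          calc (-m) ^ 2 = m ^ 2 := by ring
            _ < σ ^ 2 * ((1 - p) / p) := h2
        linarith
      · push_neg at hm
        refine ⟨(1 + α) / 2, by linarith, by linarith, by linarith, ?_⟩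
        by_cases hσz : σ = 0
        · have : 0 < m := by
            rw [hσz, mul_zero, add_zero] at hcon
            exact hcon
          rw [hσz, zero_mul]
          linarith
        · have hσpos : 0 < σ := lt_of_le_of_ne hσ0 (Ne.symm hσz)
          have hzp : 0 < Real.sqrt ((1 - (1 + α) / 2) / ((1 + α) / 2)) :=
            Real.sqrt_pos.2 (div_pos (by linarith) (by linarith))
          nlinarith
    set zp : ℝ := Real.sqrt ((1 - p) / p) with hzp
    set zm : ℝ := -Real.sqrt (p / (1 - p)) with hzm'
    have h1p : 0 < 1 - p := by linarith
    have hzp2 : zp ^ 2 = (1 - p) / p := Real.sq_sqrt (div_nonneg h1p.le hp0.le)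
    have hzm2 : zm ^ 2 = p / (1 - p) := by
      rw [hzm', neg_pow]
      simp [Real.sq_sqrt (div_nonneg hp0.le h1p.le)]
    have hz2 : p * zp ^ 2 + (1 - p) * zm ^ 2 = 1 := by
      rw [hzp2, hzm2]
      field_simp
      ring
    have hsp : (0:ℝ) < Real.sqrt p := Real.sqrt_pos.2 hp0
    have hs1p : (0:ℝ) < Real.sqrt (1 - p) := Real.sqrt_pos.2 h1p
    have hpp : Real.sqrt p * Real.sqrt p = p := Real.mul_self_sqrt hp0.le
    have h1pp : Real.sqrt (1 - p) * Real.sqrt (1 - p) = 1 - p := Real.mul_self_sqrt h1p.le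
    have hzmean : p * zp + (1 - p) * zm = 0 := by
      have e1 : zp = Real.sqrt (1 - p) / Real.sqrt p := by
        rw [hzp, Real.sqrt_div h1p.le]
      have e2 : Real.sqrt (p / (1 - p)) = Real.sqrt p / Real.sqrt (1 - p) :=
        Real.sqrt_div hp0.le _
      rw [e1, hzm', e2]
      field_simp
      nlinarith [hpp, h1pp, hsp, hs1p]
    -- construct y
    obtain ⟨y, hsx, hyc, hσc⟩ :
        ∃ y : Fin n → ℝ, (∀ i, s i * x i = σ * y i) ∧
          (∀ i j, y i * y j * (∑ kk, y kk ^ 2 - 1) = 0) ∧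
          σ * (∑ kk, y kk ^ 2) = σ := by
      by_cases hσz : σ = 0
      · refine ⟨fun _ => 0, fun i => ?_, fun i j => by simp, by rw [hσz]; simp⟩
        have hsum : ∑ i, (s i * x i) ^ 2 = 0 := by
          rw [← hσ2, hσz]
          norm_num
        have := (Finset.sum_eq_zero_iff_of_nonneg
          (fun i (_ : i ∈ Finset.univ) => sq_nonneg (s i * x i))).1 hsum i (Finset.mem_univ i)
        rw [hσz, mul_zero]
        exact pow_eq_zero_iff (n := 2) (by norm_num) |>.1 this
      · have hσpos : 0 < σ := lt_of_le_of_ne hσ0 (Ne.symm hσz)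
        have hc : ∑ kk, (s kk * x kk / σ) ^ 2 = 1 := by
          have hck : ∀ kk ∈ (Finset.univ : Finset (Fin n)),
              (s kk * x kk / σ) ^ 2 = (s kk * x kk) ^ 2 / σ ^ 2 := fun kk _ => by
            field_simp
          rw [Finset.sum_congr rfl hck, ← Finset.sum_div, ← hσ2]
          field_simp
        refine ⟨fun i => s i * x i / σ, fun i => by field_simp, ?_, ?_⟩
        · intro i j
          rw [hc]
          ring
        · rw [hc, mul_one]
    obtain ⟨P, hprob, hfm, hmean, hcov, hev⟩ :=
      construct_measure hn μstar s y x σ m p zp zm (by rw [hmdef]; rfl) hsx hyc hσc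
        hp0 hp1 hzmean hz2 hppos
    have hcov' : covMat P = Matrix.diagonal σ2star := by
      rw [hcov, show (fun i => s i ^ 2) = σ2star from funext hs2]
    have hle := H P hprob hfm hmean hcov'
    have hfin : ENNReal.ofReal (1 - α) ≤ ENNReal.ofReal (1 - p) := le_trans hle hev
    rw [ENNReal.ofReal_le_ofReal_iff (by linarith)] at hfin
    linarith
  · -- easy direction: Cantelli
    intro hineq P hprob hfm hmean hcov
    haveI := hprob
    have hYint : Integrable (fun a => dotv a x) P := by
      unfold dotv
      exact integrable_finset_sum _ fun i _ => (hfm.1 i).mul_const (x i)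
    have hYmeas : Measurable fun a => dotv a x := by
      unfold dotv
      exact Finset.measurable_sum _ fun i _ => by fun_prop
    have hmeanY : ∫ a, dotv a x ∂P = m := by
      unfold dotv
      rw [integral_finset_sum _ fun i _ => (hfm.1 i).mul_const (x i)]
      rw [hmdef]
      unfold dotv
      refine Finset.sum_congr rfl fun i _ => ?_
      rw [integral_mul_const]
      congr 1
      exact congrFun hmean i
    have hcent : ∀ i j, Integrable (fun a => (a i - μstar i) * (a j - μstar j)) P := by
      intro i j
      have hrw : (fun a : Fin n → ℝ => (a i - μstar i) * (a j - μstar j))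
          = fun a => a i * a j - μstar j * a i - μstar i * a j + μstar i * μstar j := by
        funext a
        ring
      rw [hrw]
      exact (((hfm.2 i j).sub ((hfm.1 i).const_mul (μstar j))).sub
        ((hfm.1 j).const_mul (μstar i))).add (integrable_const _)
    have hcentval : ∀ i j, ∫ a, (a i - μstar i) * (a j - μstar j) ∂P
        = (if i = j then σ2star i else 0) := by
      intro i j
      have h := congrFun (congrFun hcov i) j
      rw [covMat] at h
      simp only [Matrix.of_apply, hmean, Matrix.diagonal_apply] at h
      exact h
    have hrew : (fun a => (dotv a x - m) ^ 2)
        = fun a => ∑ i, ∑ j, ((a i - μstar i) * (a j - μstar j)) * (x i * x j) := by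
      funext a
      have hd : dotv a x - m = ∑ i, (a i - μstar i) * x i := by
        rw [hmdef]
        unfold dotv
        rw [← Finset.sum_sub_distrib]
        exact Finset.sum_congr rfl fun i _ => by ring
      rw [hd, sq, Finset.sum_mul_sum]
      exact Finset.sum_congr rfl fun i _ => Finset.sum_congr rfl fun j _ => by ring
    have hY2int : Integrable (fun a => (dotv a x - m) ^ 2) P := by
      rw [hrew]
      exact integrable_finset_sum _ fun i _ =>
        integrable_finset_sum _ fun j _ => (hcent i j).mul_const _
    have hvY : ∫ a, (dotv a x - m) ^ 2 ∂P = σ ^ 2 := by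
      rw [hrew]
      rw [integral_finset_sum _ fun i _ =>
        integrable_finset_sum _ fun j _ => (hcent i j).mul_const _]
      have hinner : ∀ i, ∫ a, (∑ j, ((a i - μstar i) * (a j - μstar j)) * (x i * x j)) ∂P
          = σ2star i * (x i * x i) := by
        intro i
        rw [integral_finset_sum _ fun j _ => (hcent i j).mul_const _]
        have hjj : ∀ j ∈ (Finset.univ : Finset (Fin n)),
            ∫ a, ((a i - μstar i) * (a j - μstar j)) * (x i * x j) ∂P
            = (if i = j then σ2star i * (x i * x j) else 0) := by
          intro j _
          rw [integral_mul_const, hcentval i j, ite_mul, zero_mul]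
        rw [Finset.sum_congr rfl hjj, Finset.sum_ite_eq]
        simp
      rw [Finset.sum_congr rfl fun i _ => hinner i, hσ2]
      refine Finset.sum_congr rfl fun i _ => ?_
      rw [← hs2 i]
      ring
    have hfin : m + Real.sqrt ((1 - α) / α) * Real.sqrt (σ ^ 2) ≤ 0 := by
      rw [Real.sqrt_sq hσ0, ← hkdef]
      exact hineq
    exact cantelli_bound P (fun a => dotv a x) hYmeas hYint hY2int hmeanY hvY hα0 hα1
      (sq_nonneg σ) hfin
end
end
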